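/- arXiv:2508.18838 — 2 statements merged into one kernel-verified Lean document; each statement's English description precedes it below -/
import Mathlib

section
/- Let d ≥ 1 and k ≥ 2, and let G = (V,D) be a graph with no isolated vertices whose edge set D is a k-fold R_d-circuit such that G is R_d-connected and the set of technicolour vertices of G is exactly {u,v}. (i) If uv ∈ D, then there exist k R_d-circuits C_1,…,C_k, each containing the edge uv, such that V(C_i) ∩ V(C_j) = {u,v} and E(C_i) ∩ E(C_j) = {uv} for all i ≠ j, and G = C_1 ∪ ⋯ ∪ C_k. (ii) If uv ∉ D, then there exist k+1 R_d-circuits C_1,…,C_{k+1}, each containing the edge uv, such that V(C_i) ∩ V(C_j) = {u,v} and E(C_i) ∩ E(C_j) = {uv} for all i ≠ j, and G = (C_1 ∪ ⋯ ∪ C_{k+1}) − uv. -/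
open scoped BigOperators

/-- The row of the `d`-dimensional rigidity matrix of a realisation `p : V → ℝ^d`
indexed by the (unordered) edge `e`. -/
noncomputable def rigRow (d : ℕ) {V : Type*} [DecidableEq V]
    (p : V → Fin d → ℝ) (e : Sym2 V) : V × Fin d → ℝ :=
  Sym2.lift
    ⟨fun u v wi =>
        (((if wi.1 = u then (1 : ℝ) else 0) - (if wi.1 = v then (1 : ℝ) else 0)) *
          (p u wi.2 - p v wi.2)),
      fun u v => by funext wi; ring⟩ e

/-- A realisation is generic if the coordinates of the points form an algebraically
independent set over `ℚ`. -/
def Generic (d : ℕ) {V : Type*} (p : V → Fin d → ℝ) : Prop :=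
  AlgebraicIndependent ℚ fun vi : V × Fin d => p vi.1 vi.2

/-- `rrk d p F` : the rank of the set of rows of the rigidity matrix of `(K_V, p)`
indexed by the edges in `F`.  For generic `p` this is the rank function `r_d` of
the generic `d`-dimensional rigidity matroid. -/
noncomputable def rrk (d : ℕ) {V : Type*} [Fintype V] [DecidableEq V]
    (p : V → Fin d → ℝ) (F : Set (Sym2 V)) : ℕ :=
  Module.finrank ℝ (Submodule.span ℝ (rigRow d p '' F))

/-- `D` is a `k`-fold circuit (with respect to the realisation `p`) :
`r (D \ {f}) = r D` for every `f ∈ D`, and `r D = |D| - k`. -/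
def IsKFoldCircuit (d : ℕ) {V : Type*} [Fintype V] [DecidableEq V]
    (p : V → Fin d → ℝ) (D : Finset (Sym2 V)) (k : ℕ) : Prop :=
  (∀ f ∈ D, rrk d p (↑D \ {f}) = rrk d p ↑D) ∧ rrk d p ↑D + k = D.card

/-- An `R_d`-circuit: `r C = |C| - 1` and `r (C \ {f}) = r C` for all `f ∈ C`. -/
def IsCircuit (d : ℕ) {V : Type*} [Fintype V] [DecidableEq V]
    (p : V → Fin d → ℝ) (C : Finset (Sym2 V)) : Prop :=
  IsKFoldCircuit d p C 1

/-- `A` is a part of the principal partition of the `k`-fold circuit `D`: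
the parts are the sets `D \ B` where `B` runs over the `(k-1)`-fold circuits
contained in `D`. -/
def IsPrincipalPart (d : ℕ) {V : Type*} [Fintype V] [DecidableEq V]
    (p : V → Fin d → ℝ) (D : Finset (Sym2 V)) (k : ℕ) (A : Finset (Sym2 V)) : Prop :=
  ∃ B ⊆ D, IsKFoldCircuit d p B (k - 1) ∧ A = D \ B

/-- Closure in the rigidity matroid: all edges of `K_V` whose addition to `F`
does not increase the rank. -/
def rcl (d : ℕ) {V : Type*} [Fintype V] [DecidableEq V]
    (p : V → Fin d → ℝ) (F : Set (Sym2 V)) : Set (Sym2 V) :=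
  {e | ¬ e.IsDiag ∧ rrk d p (insert e F) = rrk d p F}

/-- A `k`-fold circuit `D` with principal partition `A_1, …, A_ℓ` is balanced if
`r_d (⋂ i, cl_d (D \ A_i)) = ℓ - k`. -/
def IsBalanced (d : ℕ) {V : Type*} [Fintype V] [DecidableEq V]
    (p : V → Fin d → ℝ) (D : Finset (Sym2 V)) (k : ℕ) : Prop :=
  rrk d p (⋂ A ∈ {A | IsPrincipalPart d p D k A}, rcl d p ↑(D \ A)) + k =
    Set.ncard {A | IsPrincipalPart d p D k A}

/-- A vertex is monochromatic if all edges of `D` incident with it lie in a single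
part of the principal partition (and technicolour otherwise). -/
def Monochromatic (d : ℕ) {V : Type*} [Fintype V] [DecidableEq V]
    (p : V → Fin d → ℝ) (D : Finset (Sym2 V)) (k : ℕ) (w : V) : Prop :=
  ∃ A, IsPrincipalPart d p D k A ∧ ∀ e ∈ D, w ∈ e → e ∈ A

/-- The graph `(W, E)` is `R_d`-rigid: it is a complete graph on at most `d+1`
vertices, or `r_d(E) = d|W| - (d+1 choose 2)`. -/
def IsRigidOn (d : ℕ) {V : Type*} [Fintype V] [DecidableEq V]
    (p : V → Fin d → ℝ) (W : Finset V) (E : Finset (Sym2 V)) : Prop :=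
  (W.card ≤ d + 1 ∧ ∀ u ∈ W, ∀ w ∈ W, u ≠ w → s(u, w) ∈ E) ∨
    (rrk d p ↑E : ℤ) + ((d + 1).choose 2 : ℤ) = (d : ℤ) * (W.card : ℤ)

/-- The edge set of the cone of (the graph with edge set) `D` over a new vertex,
realised as `none : Option V`. -/
def coneEdges {V : Type*} [Fintype V] [DecidableEq V] (D : Finset (Sym2 V)) :
    Finset (Sym2 (Option V)) :=
  D.image (Sym2.map Option.some) ∪
    Finset.univ.image fun u : V => s((Option.some u : Option V), (none : Option V))

/-- The degree of the vertex `w` in the edge set `D`. -/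
def degIn {V : Type*} [Fintype V] [DecidableEq V] (D : Finset (Sym2 V)) (w : V) : ℕ :=
  (D.filter fun e => w ∈ e).card

/-- The set of vertices incident with an edge of `F`. -/
def esupp {V : Type*} [Fintype V] [DecidableEq V] (F : Finset (Sym2 V)) : Finset V :=
  Finset.univ.filter fun w => ∃ e ∈ F, w ∈ e

set_option linter.unusedSectionVars false
set_option synthInstance.maxHeartbeats 1000000
set_option maxHeartbeats 1000000
section StressSpace

open Finset Module

variable {d : ℕ} {V : Type*} [Fintype V] [DecidableEq V] (p : V → Fin d → ℝ)

/-- The linear map sending an edge-coefficient vector to the corresponding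
linear combination of rigidity-matrix rows. -/
noncomputable def rigT : (Sym2 V → ℝ) →ₗ[ℝ] (V × Fin d → ℝ) where
  toFun l := ∑ e, l e • rigRow d p e
  map_add' x y := by
    simp [add_smul, Finset.sum_add_distrib]
  map_smul' c x := by
    simp [smul_smul, Finset.smul_sum]

/-- Functions supported on `F`. -/
def suppInS (F : Finset (Sym2 V)) : Submodule ℝ (Sym2 V → ℝ) where
  carrier := {l | ∀ e ∉ F, l e = 0}
  add_mem' := by intro a b ha hb e he; simp [ha e he, hb e he]
  zero_mem' := by intro e _; rfl
  smul_mem' := by intro c l hl e he; simp [hl e he]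

/-- The stress space of an edge set `F`. -/
noncomputable def St (F : Finset (Sym2 V)) : Submodule ℝ (Sym2 V → ℝ) :=
  suppInS F ⊓ LinearMap.ker (rigT p)

lemma mem_St {F : Finset (Sym2 V)} {l : Sym2 V → ℝ} :
    l ∈ St p F ↔ (∀ e ∉ F, l e = 0) ∧ rigT p l = 0 := Iff.rfl

lemma St_mono {F G : Finset (Sym2 V)} (h : F ⊆ G) : St p F ≤ St p G := by
  rintro l ⟨h1, h2⟩
  exact ⟨fun e he => h1 e (fun hc => he (h hc)), h2⟩

/-- nullity -/
noncomputable def nuu (F : Finset (Sym2 V)) : ℕ := Module.finrank ℝ (St p F)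

lemma rigT_apply (l : Sym2 V → ℝ) : rigT p l = ∑ e, l e • rigRow d p e := rfl

lemma rigT_eq_sum_subset {F : Finset (Sym2 V)} {l : Sym2 V → ℝ}
    (h : ∀ e ∉ F, l e = 0) : rigT p l = ∑ e ∈ F, l e • rigRow d p e := by
  rw [rigT_apply]
  refine (Finset.sum_subset (Finset.subset_univ F) ?_).symm
  intro e _ he
  rw [h e he, zero_smul]

noncomputable def suppEquiv (F : Finset (Sym2 V)) : suppInS (V := V) F ≃ₗ[ℝ] (↥F → ℝ) where
  toFun l := fun e => l.1 e.1
  map_add' x y := rfl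
  map_smul' c x := rfl
  invFun c := ⟨fun e => if h : e ∈ F then c ⟨e, h⟩ else 0, by
    intro e he; simp [he]⟩
  left_inv := by
    rintro ⟨l, hl⟩
    ext e
    by_cases h : e ∈ F
    · simp [h]
    · simp [h, hl e h]
  right_inv := by
    intro c; ext e; simp

lemma finrank_suppInS (F : Finset (Sym2 V)) :
    Module.finrank ℝ (suppInS (V := V) F) = F.card := by
  rw [LinearEquiv.finrank_eq (suppEquiv (V := V) F)]
  rw [Module.finrank_fintype_fun_eq_card, Fintype.card_coe]

lemma rank_nullity (F : Finset (Sym2 V)) :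
    rrk d p ↑F + nuu p F = F.card := by
  classical
  set g : ↥(suppInS (V := V) F) →ₗ[ℝ] (V × Fin d → ℝ) :=
    (rigT p).domRestrict (suppInS F) with hg
  have hker : LinearMap.ker g = Submodule.comap (suppInS (V := V) F).subtype (St p F) := by
    ext x
    simp only [LinearMap.mem_ker, Submodule.mem_comap, hg, LinearMap.domRestrict_apply]
    constructor
    · intro h; exact ⟨x.2, h⟩
    · rintro ⟨-, h⟩; exact h
  have hrange : LinearMap.range g = Submodule.span ℝ (rigRow d p '' ↑F) := by
    apply le_antisymm
    · rintro y ⟨⟨l, hl⟩, rfl⟩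
      rw [hg, LinearMap.domRestrict_apply, rigT_eq_sum_subset p hl]
      exact Submodule.sum_mem _ (fun e he => Submodule.smul_mem _ _
        (Submodule.subset_span ⟨e, he, rfl⟩))
    · rw [Submodule.span_le]
      rintro y ⟨e, he, rfl⟩
      refine ⟨⟨Pi.single e 1, ?_⟩, ?_⟩
      · intro f hf
        exact Pi.single_eq_of_ne (fun hc => hf (by rw [hc]; exact he)) 1
      · rw [hg, LinearMap.domRestrict_apply, rigT_apply]
        rw [Finset.sum_eq_single e]
        · simp
        · intro f _ hf; simp [Pi.single_eq_of_ne hf]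
        · intro h; exact absurd (Finset.mem_univ e) h
  have h1 := LinearMap.finrank_range_add_finrank_ker g
  rw [hker, hrange, finrank_suppInS] at h1
  have h2 : Module.finrank ℝ (Submodule.comap (suppInS (V := V) F).subtype (St p F))
      = nuu p F := by
    exact LinearEquiv.finrank_eq (Submodule.comapSubtypeEquivOfLe (inf_le_left))
  rw [h2] at h1
  exact h1


lemma St_erase {F : Finset (Sym2 V)} {f : Sym2 V} (hf : f ∈ F) {l : Sym2 V → ℝ} :
    l ∈ St p (F.erase f) ↔ l ∈ St p F ∧ l f = 0 := by
  constructor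
  · rintro ⟨h1, h2⟩
    exact ⟨⟨fun e he => h1 e (fun hc => he (Finset.mem_of_mem_erase hc)), h2⟩,
      h1 f (Finset.notMem_erase f F)⟩
  · rintro ⟨⟨h1, h2⟩, h3⟩
    refine ⟨fun e he => ?_, h2⟩
    by_cases hef : e = f
    · rw [hef]; exact h3
    · exact h1 e (fun heF => he (Finset.mem_erase.mpr ⟨hef, heF⟩))

/-- If some stress of `F` is nonzero at `f`, nullity drops by exactly one on erasing `f`. -/
lemma nuu_erase_of_exists {F : Finset (Sym2 V)} {f : Sym2 V} (hf : f ∈ F)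
    (h : ∃ l ∈ St p F, l f ≠ 0) : nuu p (F.erase f) + 1 = nuu p F := by
  classical
  set ψ : ↥(St p F) →ₗ[ℝ] ℝ := (LinearMap.proj f).comp (St p F).subtype with hψ
  have hker : LinearMap.ker ψ = Submodule.comap (St p F).subtype (St p (F.erase f)) := by
    ext x
    simp only [LinearMap.mem_ker, Submodule.mem_comap, hψ, LinearMap.comp_apply,
      LinearMap.proj_apply, Submodule.coe_subtype]
    rw [St_erase p hf]
    exact ⟨fun h' => ⟨x.2, h'⟩, fun h' => h'.2⟩
  have hrange : Module.finrank ℝ (LinearMap.range ψ) = 1 := by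
    obtain ⟨l, hl, hlf⟩ := h
    have hne : LinearMap.range ψ ≠ ⊥ := by
      intro hc
      have : ψ ⟨l, hl⟩ = 0 := by
        have := LinearMap.mem_range_self ψ ⟨l, hl⟩
        rw [hc] at this
        simpa using this
      exact hlf this
    have h1 : Module.finrank ℝ (LinearMap.range ψ) ≤ 1 := by
      simpa using Submodule.finrank_le (LinearMap.range ψ)
    have h0 : Module.finrank ℝ (LinearMap.range ψ) ≠ 0 := by
      rw [Ne, Submodule.finrank_eq_zero]
      exact hne
    omega
  have h1 := LinearMap.finrank_range_add_finrank_ker ψ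
  rw [hker, hrange] at h1
  have h2 : Module.finrank ℝ (Submodule.comap (St p F).subtype (St p (F.erase f)))
      = nuu p (F.erase f) :=
    LinearEquiv.finrank_eq (Submodule.comapSubtypeEquivOfLe
      (St_mono p (Finset.erase_subset f F)))
  rw [h2] at h1
  rw [add_comm] at h1
  exact h1

lemma nuu_erase_of_not_exists {F : Finset (Sym2 V)} {f : Sym2 V} (hf : f ∈ F)
    (h : ¬ ∃ l ∈ St p F, l f ≠ 0) : St p (F.erase f) = St p F := by
  push_neg at h
  apply le_antisymm (St_mono p (Finset.erase_subset f F))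
  intro l hl
  rw [St_erase p hf]
  exact ⟨hl, h l hl⟩

lemma rank_drop_iff {F : Finset (Sym2 V)} {f : Sym2 V} (hf : f ∈ F) :
    rrk d p (↑F \ {f}) = rrk d p ↑F ↔ ∃ l ∈ St p F, l f ≠ 0 := by
  have hcoe : (↑F \ {f} : Set (Sym2 V)) = ↑(F.erase f) := (Finset.coe_erase f F).symm
  rw [hcoe]
  have hrn1 := rank_nullity p (F.erase f)
  have hrn2 := rank_nullity p F
  have hcard : (F.erase f).card + 1 = F.card := Finset.card_erase_add_one hf
  constructor
  · intro hr
    by_contra hc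
    have := nuu_erase_of_not_exists p hf hc
    have heq : nuu p (F.erase f) = nuu p F := by rw [nuu, nuu, this]
    omega
  · intro hex
    have := nuu_erase_of_exists p hf hex
    omega

lemma kfold_iff {F : Finset (Sym2 V)} {k : ℕ} :
    IsKFoldCircuit d p F k ↔ (nuu p F = k ∧ ∀ f ∈ F, ∃ l ∈ St p F, l f ≠ 0) := by
  have hrn := rank_nullity p F
  constructor
  · rintro ⟨h1, h2⟩
    refine ⟨by omega, fun f hf => (rank_drop_iff p hf).mp (h1 f hf)⟩
  · rintro ⟨h1, h2⟩
    exact ⟨fun f hf => (rank_drop_iff p hf).mpr (h2 f hf), by omega⟩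


lemma rigRow_mk (x y : V) (wi : V × Fin d) :
    rigRow d p s(x, y) wi =
      (((if wi.1 = x then (1 : ℝ) else 0) - (if wi.1 = y then (1 : ℝ) else 0)) *
        (p x wi.2 - p y wi.2)) := by
  rfl

lemma rigRow_not_mem {e : Sym2 V} {w : V} (hw : w ∉ e) (i : Fin d) :
    rigRow d p e (w, i) = 0 := by
  induction e using Sym2.ind with
  | _ x y =>
    rw [Sym2.mem_iff] at hw
    push_neg at hw
    rw [rigRow_mk]
    simp [hw.1, hw.2]

lemma sum_indicator_mul (x y : V) (g : V → ℝ) :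
    ∑ w : V, (((if w = x then (1 : ℝ) else 0) - (if w = y then (1 : ℝ) else 0)) * g w)
      = g x - g y := by
  have : ∀ w : V, (((if w = x then (1 : ℝ) else 0) - (if w = y then (1 : ℝ) else 0)) * g w)
      = (if w = x then g w else 0) - (if w = y then g w else 0) := by
    intro w; split_ifs <;> ring
  rw [Finset.sum_congr rfl (fun w _ => this w), Finset.sum_sub_distrib]
  rw [Finset.sum_ite_eq' Finset.univ x g, Finset.sum_ite_eq' Finset.univ y g]
  simp

lemma rigRow_col_sum (e : Sym2 V) (j : Fin d) :
    ∑ w : V, rigRow d p e (w, j) = 0 := by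
  induction e using Sym2.ind with
  | _ x y =>
    have : ∀ w : V, rigRow d p s(x, y) (w, j)
        = (((if w = x then (1 : ℝ) else 0) - (if w = y then (1 : ℝ) else 0)) *
            (p x j - p y j)) := fun w => rigRow_mk p x y (w, j)
    rw [Finset.sum_congr rfl (fun w _ => this w), sum_indicator_mul]
    ring

/-- The infinitesimal rotation in the coordinate plane `(a, b)`. -/
def rotMot (a b : Fin d) : V × Fin d → ℝ :=
  fun wi => if wi.2 = a then p wi.1 b else if wi.2 = b then - p wi.1 a else 0

lemma rigRow_orth_rot (e : Sym2 V) {a b : Fin d} (hab : a ≠ b) :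
    ∑ wi : V × Fin d, rigRow d p e wi * rotMot p a b wi = 0 := by
  induction e using Sym2.ind with
  | _ x y =>
    rw [Fintype.sum_prod_type]
    have hstep : ∀ j : Fin d, ∑ w : V, rigRow d p s(x, y) (w, j) * rotMot p a b (w, j)
        = (p x j - p y j) * (rotMot p a b (x, j) - rotMot p a b (y, j)) := by
      intro j
      have : ∀ w : V, rigRow d p s(x, y) (w, j) * rotMot p a b (w, j)
          = (((if w = x then (1 : ℝ) else 0) - (if w = y then (1 : ℝ) else 0)) *
              ((p x j - p y j) * rotMot p a b (w, j))) := by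
        intro w; rw [rigRow_mk]; ring
      rw [Finset.sum_congr rfl (fun w _ => this w),
        sum_indicator_mul x y (fun w => (p x j - p y j) * rotMot p a b (w, j))]
      ring
    rw [Finset.sum_comm]
    rw [Finset.sum_congr rfl (fun j _ => hstep j)]
    set P : ℝ := (p x a - p y a) * (p x b - p y b) with hP
    have hterm : ∀ j : Fin d, (p x j - p y j) * (rotMot p a b (x, j) - rotMot p a b (y, j))
        = (if j = a then P else 0) + (if j = b then -P else 0) := by
      intro j
      simp only [rotMot, hP]
      rcases eq_or_ne j a with rfl | h1
      · simp only [if_pos rfl, if_neg hab, if_true]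
        ring
      · rcases eq_or_ne j b with rfl | h2
        · simp only [if_neg h1, if_pos rfl, if_true]
          ring
        · simp only [if_neg h1, if_neg h2]
          ring
    rw [Finset.sum_congr rfl (fun j _ => hterm j), Finset.sum_add_distrib]
    rw [Finset.sum_ite_eq' Finset.univ a (fun _ => P),
      Finset.sum_ite_eq' Finset.univ b (fun _ => -P)]
    simp


lemma sum_eq_pair_of_vanish {u v : V} (huv : u ≠ v) (f : V → ℝ)
    (h : ∀ w, w ≠ u → w ≠ v → f w = 0) : ∑ w, f w = f u + f v := by
  rw [← Finset.sum_pair huv]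
  refine (Finset.sum_subset (Finset.subset_univ _) ?_).symm
  intro x _ hx
  rw [Finset.mem_insert, Finset.mem_singleton] at hx
  push_neg at hx
  exact h x hx.1 hx.2

lemma sum_double_ite {a b : Fin d} (hab : a ≠ b) (f g : Fin d → ℝ) :
    ∑ j, (if j = a then f j else if j = b then g j else 0) = f a + g b := by
  have : ∀ j : Fin d, (if j = a then f j else if j = b then g j else 0)
      = (if j = a then f j else 0) + (if j = b then g j else 0) := by
    intro j
    rcases eq_or_ne j a with rfl | h1
    · simp [if_neg hab]
    · simp [if_neg h1]
  rw [Finset.sum_congr rfl (fun j _ => this j), Finset.sum_add_distrib,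
    Finset.sum_ite_eq' Finset.univ a f, Finset.sum_ite_eq' Finset.univ b g]
  simp

lemma rigT_apply_coord (σ : Sym2 V → ℝ) (wi : V × Fin d) :
    rigT p σ wi = ∑ e, σ e * rigRow d p e wi := by
  rw [rigT_apply]
  rw [Finset.sum_apply]
  rfl

lemma sigma_direction (hd : 1 ≤ d) {u v : V} (huv : u ≠ v)
    (hz : p u ⟨0, hd⟩ - p v ⟨0, hd⟩ ≠ 0)
    {D A : Finset (Sym2 V)} {l₀ : Sym2 V → ℝ} (hl₀ : l₀ ∈ St p D)
    (hconf : ∀ w : V, w ≠ u → w ≠ v → ∀ f ∈ D, w ∈ f → (¬ ∃ e ∈ A, w ∈ e) ∨ f ∈ A) :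
    ∃ t : ℝ, rigT p (fun e => if e ∈ A then l₀ e else 0) = t • rigRow d p s(u, v) := by
  classical
  set σ : Sym2 V → ℝ := fun e => if e ∈ A then l₀ e else 0 with hσ
  set ρ : V × Fin d → ℝ := rigT p σ with hρ
  have hρc : ∀ wi, ρ wi = ∑ e, σ e * rigRow d p e wi := fun wi => rigT_apply_coord p σ wi
  -- Step 1 : ρ vanishes off u, v
  have hw0 : ∀ w, w ≠ u → w ≠ v → ∀ j, ρ (w, j) = 0 := by
    intro w hwu hwv j
    rw [hρc]
    by_cases hex : ∃ e ∈ A, w ∈ e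
    · have hall : ∀ f ∈ D, w ∈ f → f ∈ A := by
        intro f hf hwf
        rcases hconf w hwu hwv f hf hwf with h | h
        · exact absurd hex h
        · exact h
      have : ∀ e : Sym2 V, σ e * rigRow d p e (w, j) = l₀ e * rigRow d p e (w, j) := by
        intro e
        by_cases heA : e ∈ A
        · rw [hσ]; simp [heA]
        · rw [hσ]; simp only [if_neg heA, zero_mul]
          by_cases heD : e ∈ D
          · by_cases hwe : w ∈ e
            · exact absurd (hall e heD hwe) heA
            · rw [rigRow_not_mem p hwe, mul_zero]
          · rw [hl₀.1 e heD, zero_mul]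
      rw [Finset.sum_congr rfl (fun e _ => this e)]
      have h0 : rigT p l₀ (w, j) = 0 := by rw [hl₀.2]; rfl
      rw [← rigT_apply_coord p l₀ (w, j)]
      exact h0
    · push_neg at hex
      refine Finset.sum_eq_zero (fun e _ => ?_)
      by_cases heA : e ∈ A
      · rw [rigRow_not_mem p (hex e heA), mul_zero]
      · rw [hσ]; simp [heA]
  -- Step 2 : antisymmetry
  have hanti : ∀ j, ρ (v, j) = - ρ (u, j) := by
    intro j
    have hsum : ∑ w, ρ (w, j) = 0 := by
      have : ∀ w, ρ (w, j) = ∑ e, σ e * rigRow d p e (w, j) := fun w => hρc (w, j)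
      rw [Finset.sum_congr rfl (fun w _ => this w), Finset.sum_comm]
      refine Finset.sum_eq_zero (fun e _ => ?_)
      rw [← Finset.mul_sum, rigRow_col_sum, mul_zero]
    rw [sum_eq_pair_of_vanish huv _ (fun w h1 h2 => hw0 w h1 h2 j)] at hsum
    linarith
  -- Step 3 : rotation relations
  have hrot : ∀ a b : Fin d, ρ (u, a) * (p u b - p v b) = ρ (u, b) * (p u a - p v a) := by
    intro a b
    rcases eq_or_ne a b with rfl | hab
    · rfl
    · have horth : ∑ wi : V × Fin d, ρ wi * rotMot p a b wi = 0 := by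
        have : ∀ wi, ρ wi * rotMot p a b wi
            = ∑ e, σ e * (rigRow d p e wi * rotMot p a b wi) := by
          intro wi
          rw [hρc, Finset.sum_mul]
          exact Finset.sum_congr rfl (fun e _ => by ring)
        rw [Finset.sum_congr rfl (fun wi _ => this wi), Finset.sum_comm]
        refine Finset.sum_eq_zero (fun e _ => ?_)
        rw [← Finset.mul_sum, rigRow_orth_rot p e hab, mul_zero]
      rw [Fintype.sum_prod_type] at horth
      rw [sum_eq_pair_of_vanish huv _ (fun w h1 h2 => by
        refine Finset.sum_eq_zero (fun j _ => ?_)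
        rw [hw0 w h1 h2 j, zero_mul])] at horth
      have hu : ∑ j, ρ (u, j) * rotMot p a b (u, j)
          = ρ (u, a) * p u b + ρ (u, b) * (- p u a) := by
        have : ∀ j : Fin d, ρ (u, j) * rotMot p a b (u, j)
            = (if j = a then ρ (u, j) * p u b else if j = b then ρ (u, j) * (- p u a) else 0) := by
          intro j
          simp only [rotMot]
          split_ifs <;> ring
        rw [Finset.sum_congr rfl (fun j _ => this j),
          sum_double_ite hab (fun j => ρ (u, j) * p u b) (fun j => ρ (u, j) * (- p u a))]
      have hv : ∑ j, ρ (v, j) * rotMot p a b (v, j)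
          = - (ρ (u, a) * p v b) + - (ρ (u, b) * (- p v a)) := by
        have : ∀ j : Fin d, ρ (v, j) * rotMot p a b (v, j)
            = (if j = a then - (ρ (u, j) * p v b) else if j = b then - (ρ (u, j) * (- p v a)) else 0) := by
          intro j
          simp only [rotMot]
          rw [hanti j]
          split_ifs <;> ring
        rw [Finset.sum_congr rfl (fun j _ => this j),
          sum_double_ite hab (fun j => - (ρ (u, j) * p v b)) (fun j => - (ρ (u, j) * (- p v a)))]
      rw [hu, hv] at horth
      linarith
  -- Step 4 : the scalar
  set j0 : Fin d := ⟨0, hd⟩ with hj0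
  refine ⟨ρ (u, j0) / (p u j0 - p v j0), ?_⟩
  have hq : ∀ j, ρ (u, j) = ρ (u, j0) / (p u j0 - p v j0) * (p u j - p v j) := by
    intro j
    have := hrot j j0
    field_simp
    linarith [this]
  funext wi
  obtain ⟨w, i⟩ := wi
  rw [Pi.smul_apply, smul_eq_mul]
  have hrr : rigRow d p s(u, v) (w, i)
      = (((if w = u then (1 : ℝ) else 0) - (if w = v then (1 : ℝ) else 0)) *
          (p u i - p v i)) := rigRow_mk p u v (w, i)
  rcases eq_or_ne w u with rfl | hwu
  · rw [hrr, if_pos rfl, if_neg huv]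
    have := hq i
    rw [← hρ] at *
    rw [this]
    ring
  · rcases eq_or_ne w v with rfl | hwv
    · rw [hrr, if_neg (Ne.symm huv), if_pos rfl]
      rw [← hρ] at *
      rw [hanti i, hq i]
      ring
    · rw [hrr, if_neg hwu, if_neg hwv]
      rw [← hρ] at *
      rw [hw0 w hwu hwv i]
      ring


lemma part_exists {D : Finset (Sym2 V)} {k : ℕ} (hk : 2 ≤ k)
    (hDk : nuu p D = k) (hstress : ∀ f ∈ D, ∃ l ∈ St p D, l f ≠ 0)
    {f : Sym2 V} (hf : f ∈ D) : ∃ A, IsPrincipalPart d p D k A ∧ f ∈ A := by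
  classical
  have herase : nuu p (D.erase f) = k - 1 := by
    have := nuu_erase_of_exists p hf (hstress f hf)
    omega
  set S : Finset (Finset (Sym2 V)) :=
    (D.erase f).powerset.filter (fun B => nuu p B = k - 1) with hS
  have hSne : S.Nonempty := ⟨D.erase f, by
    rw [hS, Finset.mem_filter, Finset.mem_powerset]
    exact ⟨le_refl _, herase⟩⟩
  obtain ⟨B, hBS, hBmin⟩ := Finset.exists_min_image S Finset.card hSne
  rw [hS, Finset.mem_filter, Finset.mem_powerset] at hBS
  obtain ⟨hBsub, hBnu⟩ := hBS
  have hBD : B ⊆ D := hBsub.trans (Finset.erase_subset f D)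
  have hcirc : IsKFoldCircuit d p B (k - 1) := by
    rw [kfold_iff]
    refine ⟨hBnu, fun g hg => ?_⟩
    by_contra hc
    have hSt := nuu_erase_of_not_exists p hg hc
    have : nuu p (B.erase g) = k - 1 := by rw [nuu, hSt]; exact hBnu
    have hmem : B.erase g ∈ S := by
      rw [hS, Finset.mem_filter, Finset.mem_powerset]
      exact ⟨(Finset.erase_subset g B).trans hBsub, this⟩
    have := hBmin _ hmem
    have := Finset.card_erase_lt_of_mem hg
    omega
  refine ⟨D \ B, ⟨B, hBD, hcirc, rfl⟩, ?_⟩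
  rw [Finset.mem_sdiff]
  exact ⟨hf, fun hc => Finset.notMem_erase f D (hBsub hc)⟩

lemma kfold_not_subset {k : ℕ} (hk : 2 ≤ k)
    {B1 B2 : Finset (Sym2 V)}
    (h1 : IsKFoldCircuit d p B1 (k - 1)) (h2 : IsKFoldCircuit d p B2 (k - 1))
    (hne : B1 ≠ B2) : ¬ B1 ⊆ B2 := by
  intro hsub
  obtain ⟨hnu1, hst1⟩ := (kfold_iff p).mp h1
  obtain ⟨hnu2, hst2⟩ := (kfold_iff p).mp h2
  obtain ⟨g, hg2, hg1⟩ := Finset.exists_of_ssubset (hsub.ssubset_of_ne hne)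
  have hsub' : B1 ⊆ B2.erase g := fun x hx =>
    Finset.mem_erase.mpr ⟨fun hc => hg1 (hc ▸ hx), hsub hx⟩
  have h3 : nuu p (B2.erase g) + 1 = k - 1 := by
    rw [← hnu2]
    exact nuu_erase_of_exists p hg2 (hst2 g hg2)
  have h4 : nuu p B1 ≤ nuu p (B2.erase g) := Submodule.finrank_mono (St_mono p hsub')
  omega

lemma parts_disjoint {D : Finset (Sym2 V)} {k : ℕ} (hk : 2 ≤ k)
    (hDk : nuu p D = k) (hstress : ∀ f ∈ D, ∃ l ∈ St p D, l f ≠ 0)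
    {A A' : Finset (Sym2 V)} (hA : IsPrincipalPart d p D k A)
    (hA' : IsPrincipalPart d p D k A') (hne : A ≠ A') : A ∩ A' = ∅ := by
  classical
  obtain ⟨B, hBD, hBk, rfl⟩ := hA
  obtain ⟨B', hBD', hBk', rfl⟩ := hA'
  have hBne : B ≠ B' := fun hc => hne (by rw [hc])
  by_contra hcon
  obtain ⟨f, hf⟩ := Finset.nonempty_iff_ne_empty.mpr hcon
  rw [Finset.mem_inter, Finset.mem_sdiff, Finset.mem_sdiff] at hf
  obtain ⟨⟨hfD, hfB⟩, -, hfB'⟩ := hf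
  obtain ⟨hnuB, -⟩ := (kfold_iff p).mp hBk
  obtain ⟨hnuB', hstB'⟩ := (kfold_iff p).mp hBk'
  -- B ∩ B' has small nullity
  have hnsub : ¬ B ⊆ B' := kfold_not_subset p hk hBk hBk' hBne
  obtain ⟨g, hgB, hgB'⟩ := Finset.not_subset.mp hnsub
  have hBB'sub : B ∩ B' ⊆ B.erase g := fun x hx => Finset.mem_erase.mpr
    ⟨fun hc => hgB' (hc ▸ (Finset.mem_inter.mp hx).2), (Finset.mem_inter.mp hx).1⟩
  obtain ⟨-, hstB⟩ := (kfold_iff p).mp hBk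
  have hBg : nuu p (B.erase g) + 1 = k - 1 := by
    rw [← hnuB]
    exact nuu_erase_of_exists p hgB (hstB g hgB)
  have hinf_le : Module.finrank ℝ (St p B ⊓ St p B' : Submodule ℝ (Sym2 V → ℝ))
      ≤ nuu p (B.erase g) := by
    refine Submodule.finrank_mono (le_trans ?_ (St_mono p hBB'sub))
    rintro l ⟨hl1, hl2⟩
    refine ⟨fun e he => ?_, hl1.2⟩
    rw [Finset.mem_inter] at he
    push_neg at he
    by_cases heB : e ∈ B
    · exact hl2.1 e (he heB)
    · exact hl1.1 e heB
  -- B ∪ B' misses f, so sup of stress spaces is small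
  have hsup_le : Module.finrank ℝ (St p B ⊔ St p B' : Submodule ℝ (Sym2 V → ℝ))
      ≤ nuu p (D.erase f) := by
    refine Submodule.finrank_mono (sup_le ?_ ?_) <;>
      refine St_mono p (fun x hx => Finset.mem_erase.mpr ?_)
    · exact ⟨fun hc => hfB (hc ▸ hx), hBD hx⟩
    · exact ⟨fun hc => hfB' (hc ▸ hx), hBD' hx⟩
  have hDf : nuu p (D.erase f) + 1 = k := by
    rw [← hDk]
    exact nuu_erase_of_exists p hfD (hstress f hfD)
  have := Submodule.finrank_sup_add_finrank_inf_eq (St p B) (St p B')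
  have e1 : Module.finrank ℝ ↥(St p B) = k - 1 := hnuB
  have e2 : Module.finrank ℝ ↥(St p B') = k - 1 := hnuB'
  omega

lemma part_sigma {D A : Finset (Sym2 V)} {k : ℕ} (hk : 2 ≤ k)
    (hDk : nuu p D = k) (hstress : ∀ f ∈ D, ∃ l ∈ St p D, l f ≠ 0)
    (hA : IsPrincipalPart d p D k A) :
    ∃ l₀ ∈ St p D, (∀ e ∈ A, l₀ e ≠ 0) ∧
      (∀ l ∈ St p D, ∃ c : ℝ, ∀ e ∈ A, l e = c * l₀ e) := by
  classical
  obtain ⟨B, hBD, hBk, hAeq⟩ := hA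
  obtain ⟨hnuB, -⟩ := (kfold_iff p).mp hBk
  set mask : (Sym2 V → ℝ) →ₗ[ℝ] (Sym2 V → ℝ) :=
    { toFun := fun l => fun e => if e ∈ A then l e else 0
      map_add' := by intro x y; funext e; by_cases h : e ∈ A <;> simp [h]
      map_smul' := by intro c x; funext e; by_cases h : e ∈ A <;> simp [h] } with hmask
  set r : ↥(St p D) →ₗ[ℝ] (Sym2 V → ℝ) := mask.comp (St p D).subtype with hr
  have hmask_apply : ∀ (l : Sym2 V → ℝ) (e : Sym2 V),
      mask l e = if e ∈ A then l e else 0 := fun l e => rfl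
  have hStBD : St p B ≤ St p D := St_mono p hBD
  have hker : LinearMap.ker r = Submodule.comap (St p D).subtype (St p B) := by
    ext x
    simp only [LinearMap.mem_ker, Submodule.mem_comap, hr, LinearMap.comp_apply,
      Submodule.coe_subtype]
    constructor
    · intro h
      have hvan : ∀ e ∈ A, (x : Sym2 V → ℝ) e = 0 := by
        intro e he
        have := congrFun h e
        rwa [hmask_apply, if_pos he] at this
      refine ⟨fun e heB => ?_, x.2.2⟩
      by_cases heA : e ∈ A
      · exact hvan e heA
      · by_cases heD : e ∈ D
        · exact absurd (by rw [hAeq, Finset.mem_sdiff]; exact ⟨heD, heB⟩) heA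
        · exact x.2.1 e heD
    · intro h
      funext e
      rw [hmask_apply]
      by_cases heA : e ∈ A
      · rw [if_pos heA]
        refine h.1 e ?_
        rw [hAeq, Finset.mem_sdiff] at heA
        exact heA.2
      · rw [if_neg heA]; rfl
  have hkerdim : Module.finrank ℝ (LinearMap.ker r) = k - 1 := by
    rw [hker]
    rw [LinearEquiv.finrank_eq (Submodule.comapSubtypeEquivOfLe hStBD)]
    exact hnuB
  have hrange1 : Module.finrank ℝ (LinearMap.range r) = 1 := by
    have := LinearMap.finrank_range_add_finrank_ker r
    rw [hkerdim] at this
    have hdom : Module.finrank ℝ ↥(St p D) = k := hDk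
    omega
  -- A is nonempty
  have hAne : A.Nonempty := by
    rw [Finset.nonempty_iff_ne_empty]
    intro hc
    rw [hAeq] at hc
    have : D ⊆ B := by
      intro x hx
      by_contra hxB
      have : x ∈ D \ B := Finset.mem_sdiff.mpr ⟨hx, hxB⟩
      rw [hc] at this
      exact absurd this (Finset.notMem_empty x)
    have hBD2 : B = D := le_antisymm hBD this
    rw [hBD2] at hnuB
    omega
  obtain ⟨e₀, he₀⟩ := hAne
  have he₀D : e₀ ∈ D := by
    rw [hAeq, Finset.mem_sdiff] at he₀; exact he₀.1
  obtain ⟨lstar, hlstar, hlstar0⟩ := hstress e₀ he₀D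
  set σ₀ : Sym2 V → ℝ := r ⟨lstar, hlstar⟩ with hσ₀
  have hσ₀mem : σ₀ ∈ LinearMap.range r := LinearMap.mem_range_self r _
  have hσ₀ne : σ₀ ≠ 0 := by
    intro hc
    have := congrFun hc e₀
    rw [hσ₀] at this
    simp only [hr, LinearMap.comp_apply, Submodule.coe_subtype, hmask_apply] at this
    rw [if_pos he₀] at this
    exact hlstar0 this
  have hone : ∀ y ∈ LinearMap.range r, ∃ c : ℝ, y = c • σ₀ := by
    intro y hy
    have := (finrank_eq_one_iff_of_nonzero' (⟨σ₀, hσ₀mem⟩ : ↥(LinearMap.range r))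
      (by rw [Ne, Submodule.mk_eq_zero]; exact hσ₀ne)).mp hrange1 ⟨y, hy⟩
    obtain ⟨c, hc⟩ := this
    refine ⟨c, ?_⟩
    have := congrArg (Subtype.val) hc
    exact this.symm
  have hmul : ∀ l ∈ St p D, ∃ c : ℝ, ∀ e ∈ A, l e = c * lstar e := by
    intro l hl
    obtain ⟨c, hc⟩ := hone (r ⟨l, hl⟩) (LinearMap.mem_range_self r _)
    refine ⟨c, fun e he => ?_⟩
    have := congrFun hc e
    simp only [hr, LinearMap.comp_apply, Submodule.coe_subtype, hmask_apply, hσ₀,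
      Pi.smul_apply, smul_eq_mul] at this
    simp only [if_pos he] at this
    exact this
  refine ⟨lstar, hlstar, fun e he => ?_, hmul⟩
  obtain ⟨l', hl', hl'0⟩ := hstress e (by rw [hAeq, Finset.mem_sdiff] at he; exact he.1)
  obtain ⟨c, hc⟩ := hmul l' hl'
  intro hzero
  rw [hc e he, hzero, mul_zero] at hl'0
  exact hl'0 rfl


lemma rigT_single (e : Sym2 V) : rigT p (Pi.single e (1 : ℝ)) = rigRow d p e := by
  rw [rigT_apply, Finset.sum_eq_single e]
  · simp
  · intro f _ hf
    rw [Pi.single_eq_of_ne hf, zero_smul]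
  · intro h
    exact absurd (Finset.mem_univ e) h

lemma circuit_nowhere_zero {C : Finset (Sym2 V)} (h1 : nuu p C = 1)
    (h2 : ∀ g ∈ C, ∃ l ∈ St p C, l g ≠ 0) : ∃ l ∈ St p C, ∀ g ∈ C, l g ≠ 0 := by
  have hne : ∃ l ∈ St p C, l ≠ 0 := by
    by_contra hc
    push_neg at hc
    have hbot : St p C = ⊥ := by
      rw [Submodule.eq_bot_iff]
      exact hc
    rw [nuu, hbot] at h1
    simp at h1
  obtain ⟨lb, hlb, hlbne⟩ := hne
  refine ⟨lb, hlb, fun g hg => ?_⟩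
  obtain ⟨l, hl, hl0⟩ := h2 g hg
  obtain ⟨c, hc⟩ := (finrank_eq_one_iff_of_nonzero' (⟨lb, hlb⟩ : ↥(St p C))
    (by rw [Ne, Submodule.mk_eq_zero]; exact hlbne)).mp h1 ⟨l, hl⟩
  have hval : l g = c * lb g := by
    have h3 : l = c • lb := (congrArg Subtype.val hc).symm
    rw [h3]
    rfl
  intro hzero
  rw [hzero, mul_zero] at hval
  exact hl0 hval

end StressSpace

/-- Proposition 3.11: structure of `R_d`-connected `k`-fold `R_d`-circuits with
exactly two technicolour vertices `u, v`. -/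
theorem kfold_circuit_two_technicolour_structure
    (d k : ℕ) (hd : 1 ≤ d) (hk : 2 ≤ k)
    {V : Type*} [Fintype V] [DecidableEq V]
    (D : Finset (Sym2 V)) (hsimple : ∀ e ∈ D, ¬ e.IsDiag)
    (hcov : ∀ w : V, ∃ e ∈ D, w ∈ e)
    (p : V → Fin d → ℝ) (hp : Generic d p)
    (hD : IsKFoldCircuit d p D k)
    (hconn : ∀ e ∈ D, ∀ f ∈ D, e ≠ f →
      ∃ C : Finset (Sym2 V), IsCircuit d p C ∧ C ⊆ D ∧ e ∈ C ∧ f ∈ C)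
    (u v : V) (huv : u ≠ v)
    (htech : {w : V | ¬ Monochromatic d p D k w} = {u, v}) :
    (s(u, v) ∈ D →
      ∃ C : Fin k → Finset (Sym2 V),
        (∀ i, IsCircuit d p (C i) ∧ s(u, v) ∈ C i) ∧
        (∀ i j, i ≠ j → esupp (C i) ∩ esupp (C j) = {u, v} ∧
          C i ∩ C j = {s(u, v)}) ∧
        D = Finset.univ.sup C) ∧
    (s(u, v) ∉ D →
      ∃ C : Fin (k+1) → Finset (Sym2 V),
        (∀ i, IsCircuit d p (C i) ∧ s(u, v) ∈ C i) ∧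
        (∀ i j, i ≠ j → esupp (C i) ∩ esupp (C j) = {u, v} ∧
          C i ∩ C j = {s(u, v)}) ∧
        D = (Finset.univ.sup C).erase (s(u, v))) := by
  classical
  obtain ⟨hDk0, hstress0⟩ := (kfold_iff p).mp hD
  set j0 : Fin d := ⟨0, hd⟩ with hj0
  have hz0 : p u j0 - p v j0 ≠ 0 := by
    refine sub_ne_zero.mpr (fun h => huv ?_)
    have := hp.injective (a₁ := (u, j0)) (a₂ := (v, j0)) h
    exact congrArg Prod.fst this
  have hmono : ∀ w : V, w ≠ u → w ≠ v → Monochromatic d p D k w := by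
    intro w hwu hwv
    by_contra hc
    have hmem := (Set.ext_iff.mp htech w).mp hc
    rcases hmem with h | h
    · exact hwu h
    · exact hwv h
  -- the set of principal parts
  set PP : Finset (Finset (Sym2 V)) :=
    D.powerset.filter (fun A => IsPrincipalPart d p D k A) with hPPdef
  have hmemPP : ∀ {A : Finset (Sym2 V)}, A ∈ PP ↔ IsPrincipalPart d p D k A := by
    intro A
    rw [hPPdef, Finset.mem_filter, Finset.mem_powerset]
    constructor
    · exact And.right
    · intro h
      refine ⟨?_, h⟩
      obtain ⟨B, hB, -, rfl⟩ := h
      exact Finset.sdiff_subset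
  have hsubD : ∀ {A : Finset (Sym2 V)}, A ∈ PP → A ⊆ D := by
    intro A hA
    obtain ⟨B, hB, -, rfl⟩ := hmemPP.mp hA
    exact Finset.sdiff_subset
  have hcover : ∀ f ∈ D, ∃ A, A ∈ PP ∧ f ∈ A := by
    intro f hf
    obtain ⟨A, hA, hfA⟩ := part_exists p hk hDk0 hstress0 hf
    exact ⟨A, hmemPP.mpr hA, hfA⟩
  have hdisj : ∀ {A A' : Finset (Sym2 V)}, A ∈ PP → A' ∈ PP → A ≠ A' → A ∩ A' = ∅ :=
    fun hA hA' hne => parts_disjoint p hk hDk0 hstress0 (hmemPP.mp hA) (hmemPP.mp hA') hne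
  have hPne : ∀ {A : Finset (Sym2 V)}, A ∈ PP → A.Nonempty := by
    intro A hA
    obtain ⟨B, hBD, hBk, rfl⟩ := hmemPP.mp hA
    obtain ⟨hnuB, -⟩ := (kfold_iff p).mp hBk
    rw [Finset.nonempty_iff_ne_empty]
    intro hc
    have hDB : D ⊆ B := by
      intro x hx
      by_contra hxB
      have hmem : x ∈ D \ B := Finset.mem_sdiff.mpr ⟨hx, hxB⟩
      rw [hc] at hmem
      exact absurd hmem (Finset.notMem_empty x)
    have : B = D := le_antisymm hBD hDB
    rw [this, hDk0] at hnuB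
    omega
  have hBne : ∀ {A : Finset (Sym2 V)}, A ∈ PP → (D \ A).Nonempty := by
    intro A hA
    obtain ⟨B, hBD, hBk, rfl⟩ := hmemPP.mp hA
    obtain ⟨hnuB, -⟩ := (kfold_iff p).mp hBk
    have hDA : D \ (D \ B) = B := Finset.sdiff_sdiff_eq_self hBD
    rw [hDA, ← Finset.card_pos]
    have := rank_nullity p B
    omega
  -- choose stresses for the parts
  have hmain : ∀ A : ↥PP, ∃ (l : Sym2 V → ℝ) (t : ℝ),
      l ∈ St p D ∧ (∀ e ∈ A.1, l e ≠ 0) ∧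
      (∀ l' ∈ St p D, ∃ c : ℝ, ∀ e ∈ A.1, l' e = c * l e) ∧
      rigT p (fun e => if e ∈ A.1 then l e else 0) = t • rigRow d p s(u, v) := by
    rintro ⟨A, hA⟩
    obtain ⟨l, hlSt, hlnz, hlmul⟩ := part_sigma p hk hDk0 hstress0 (hmemPP.mp hA)
    have hconf : ∀ w : V, w ≠ u → w ≠ v → ∀ f ∈ D, w ∈ f →
        (¬ ∃ e ∈ A, w ∈ e) ∨ f ∈ A := by
      intro w hwu hwv f hf hwf
      by_cases hex : ∃ e ∈ A, w ∈ e
      · right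
        obtain ⟨e, heA, hwe⟩ := hex
        obtain ⟨Am, hAmPart, hAmall⟩ := hmono w hwu hwv
        have hAmPP : Am ∈ PP := hmemPP.mpr hAmPart
        have heD : e ∈ A → e ∈ D := fun h => hsubD hA h
        have heAm : e ∈ Am := hAmall e (heD heA) hwe
        have hAeq : Am = A := by
          by_contra hne
          have := hdisj hAmPP hA hne
          have hmem : e ∈ Am ∩ A := Finset.mem_inter.mpr ⟨heAm, heA⟩
          rw [this] at hmem
          exact absurd hmem (Finset.notMem_empty e)
        rw [← hAeq]
        exact hAmall f hf hwf
      · exact Or.inl hex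
    obtain ⟨t, ht⟩ := sigma_direction p hd huv hz0 hlSt hconf
    exact ⟨l, t, hlSt, hlnz, hlmul, ht⟩
  choose lA tA hlSt hlnz hlmul hldir using hmain
  set sA : ↥PP → (Sym2 V → ℝ) := fun A => fun e => if e ∈ A.1 then lA A e else 0 with hsAdef
  have hldir' : ∀ A : ↥PP, rigT p (sA A) = tA A • rigRow d p s(u, v) := by
    intro A
    rw [hsAdef]
    exact hldir A
  have heAex : ∀ A : ↥PP, ∃ e, e ∈ A.1 := fun A => hPne A.2
  choose eA heA using heAex
  -- coefficient formula
  have hc_eq : ∀ (x : Sym2 V → ℝ), x ∈ St p D → ∀ A : ↥PP, ∀ e ∈ A.1,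
      x e = (x (eA A) / lA A (eA A)) * lA A e := by
    intro x hx A e he
    obtain ⟨c, hc⟩ := hlmul A x hx
    have h1 := hc (eA A) (heA A)
    have h2 := hc e he
    have hne := hlnz A (eA A) (heA A)
    have hcv : c = x (eA A) / lA A (eA A) := by
      rw [h1]
      field_simp
    rw [h2, hcv]
  have hrigT_sA : ∀ A : ↥PP, rigT p (sA A) = ∑ e ∈ A.1, lA A e • rigRow d p e := by
    intro A
    rw [rigT_eq_sum_subset p (F := A.1) (fun e he => by rw [hsAdef]; exact if_neg he)]
    refine Finset.sum_congr rfl (fun e he => ?_)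
    rw [hsAdef]
    simp only [if_pos he]
  have hrow_ne : rigRow d p s(u, v) ≠ 0 := by
    intro hcon
    have h1 := congrFun hcon (u, j0)
    rw [rigRow_mk] at h1
    simp only [if_pos rfl, if_neg huv, eq_self_iff_true, if_true, sub_zero, one_mul,
      Pi.zero_apply] at h1
    exact hz0 h1
  -- partition of D by parts
  have hbiU : D = PP.biUnion id := by
    ext f
    rw [Finset.mem_biUnion]
    constructor
    · intro hf
      obtain ⟨A, hA, hfA⟩ := hcover f hf
      exact ⟨A, hA, hfA⟩
    · rintro ⟨A, hA, hfA⟩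
      exact hsubD hA hfA
  have hpd : (↑PP : Set (Finset (Sym2 V))).PairwiseDisjoint id := by
    intro A hA A' hA' hne
    simp only [Function.onFun, id]
    rw [Finset.disjoint_iff_inter_eq_empty]
    exact hdisj (Finset.mem_coe.mp hA) (Finset.mem_coe.mp hA') hne
  -- the key linear relation
  have hdecomp : ∀ x ∈ St p D, ∑ A : ↥PP, (x (eA A) / lA A (eA A)) * tA A = 0 := by
    intro x hx
    have h1 : rigT p x = ∑ e ∈ D, x e • rigRow d p e := rigT_eq_sum_subset p hx.1
    have h2 : ∑ e ∈ D, x e • rigRow d p e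
        = ∑ A ∈ PP.attach, ∑ e ∈ A.1, x e • rigRow d p e := by
      conv_lhs => rw [hbiU]
      rw [Finset.sum_biUnion hpd]
      simp only [id]
      rw [← Finset.sum_attach PP (fun A => ∑ e ∈ A, x e • rigRow d p e)]
    have h3 : ∀ A : ↥PP, ∑ e ∈ A.1, x e • rigRow d p e
        = ((x (eA A) / lA A (eA A)) * tA A) • rigRow d p s(u, v) := by
      intro A
      have hterm : ∀ e ∈ A.1, x e • rigRow d p e
          = (x (eA A) / lA A (eA A)) • (lA A e • rigRow d p e) := by
        intro e he
        rw [smul_smul, ← hc_eq x hx A e he]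
      rw [Finset.sum_congr rfl hterm, ← Finset.smul_sum, ← hrigT_sA A, hldir A, smul_smul]
    have h4 : (∑ A : ↥PP, (x (eA A) / lA A (eA A)) * tA A) • rigRow d p s(u, v) = 0 := by
      rw [Finset.sum_smul, Finset.sum_congr rfl (fun A _ => (h3 A).symm),
        Finset.univ_eq_attach, ← h2, ← h1]
      exact hx.2
    rcases smul_eq_zero.mp h4 with h | h
    · exact h
    · exact absurd h hrow_ne
  -- t ≠ 0
  have htne : ∀ A : ↥PP, tA A ≠ 0 := by
    intro A ht0
    obtain ⟨e₀, he₀⟩ := hPne A.2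
    obtain ⟨f₀, hf₀⟩ := hBne A.2
    rw [Finset.mem_sdiff] at hf₀
    obtain ⟨hf₀D, hf₀A⟩ := hf₀
    have hne0 : e₀ ≠ f₀ := fun h => hf₀A (h ▸ he₀)
    obtain ⟨C, hCcirc, hCD, heC, hfC⟩ := hconn e₀ (hsubD A.2 he₀) f₀ hf₀D hne0
    obtain ⟨hCnu, hCst⟩ := (kfold_iff p).mp (hCcirc : IsKFoldCircuit d p C 1)
    obtain ⟨lb, hlbSt, hlbnz⟩ := circuit_nowhere_zero p hCnu hCst
    have hlbStD : lb ∈ St p D := St_mono p hCD hlbSt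
    obtain ⟨c, hcmul⟩ := hlmul A lb hlbStD
    have hcne : c ≠ 0 := by
      intro hc0
      have h1 := hcmul e₀ he₀
      rw [hc0, zero_mul] at h1
      exact hlbnz e₀ heC h1
    have hAC : A.1 ⊆ C := by
      intro g hg
      by_contra hgC
      have h1 : lb g = 0 := hlbSt.1 g hgC
      have h2 := hcmul g hg
      rw [h1] at h2
      exact (mul_ne_zero hcne (hlnz A g hg)) h2.symm
    set μ : Sym2 V → ℝ := lb - c • sA A with hμ
    have hμSt : μ ∈ St p (C.erase e₀) := by
      constructor
      · intro e he
        rw [hμ]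
        simp only [Pi.sub_apply, Pi.smul_apply, smul_eq_mul]
        rcases eq_or_ne e e₀ with rfl | hee
        · simp only [hsAdef, if_pos he₀]
          rw [hcmul e he₀]
          ring
        · have heC' : e ∉ C := fun hc => he (Finset.mem_erase.mpr ⟨hee, hc⟩)
          have heA2 : e ∉ A.1 := fun h => heC' (hAC h)
          rw [hlbSt.1 e heC']
          simp only [hsAdef, if_neg heA2]
          ring
      · show rigT p μ = 0
        rw [hμ, map_sub, map_smul, hlbSt.2, hldir A, ht0, zero_smul, smul_zero, sub_zero]
    have hν0 : nuu p (C.erase e₀) = 0 := by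
      have := nuu_erase_of_exists p heC ⟨lb, hlbSt, hlbnz e₀ heC⟩
      omega
    have hbot : St p (C.erase e₀) = ⊥ := Submodule.finrank_eq_zero.mp hν0
    rw [hbot] at hμSt
    have hμ0 : μ = 0 := (Submodule.mem_bot ℝ).mp hμSt
    have hlf : lb f₀ = 0 := by
      have h5 := congrFun hμ0 f₀
      rw [hμ] at h5
      simp only [Pi.sub_apply, Pi.smul_apply, smul_eq_mul, Pi.zero_apply] at h5
      rw [show sA A f₀ = 0 from by simp only [hsAdef]; exact if_neg hf₀A, mul_zero,
        sub_zero] at h5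
      exact h5
    exact hlbnz f₀ hfC hlf
  -- stress space of a single part is trivial
  have hStA : ∀ A : ↥PP, St p A.1 = ⊥ := by
    intro A
    rw [Submodule.eq_bot_iff]
    intro x hx
    have hxD : x ∈ St p D := St_mono p (hsubD A.2) hx
    have hd0 := hdecomp x hxD
    have hzz : ∀ A' : ↥PP, A' ≠ A → (x (eA A') / lA A' (eA A')) * tA A' = 0 := by
      intro A' hne
      have heAA : eA A' ∉ A.1 := by
        intro hcm
        have hAA' : A'.1 ≠ A.1 := fun h => hne (Subtype.ext h)
        have hdd := hdisj A'.2 A.2 hAA'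
        have hmm : eA A' ∈ A'.1 ∩ A.1 := Finset.mem_inter.mpr ⟨heA A', hcm⟩
        rw [hdd] at hmm
        exact absurd hmm (Finset.notMem_empty _)
      rw [hx.1 (eA A') heAA, zero_div, zero_mul]
    rw [Finset.sum_eq_single A (fun b _ hb => hzz b hb)
      (fun h => absurd (Finset.mem_univ A) h)] at hd0
    have hxeA : x (eA A) / lA A (eA A) = 0 := by
      rcases mul_eq_zero.mp hd0 with h | h
      · exact h
      · exact absurd h (htne A)
    funext e
    by_cases he : e ∈ A.1
    · rw [hc_eq x hxD A e he, hxeA, zero_mul]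
      rfl
    · exact hx.1 e he
  -- number of parts
  have hcard : PP.card = k + 1 := by
    set φt : (↥PP → ℝ) →ₗ[ℝ] ℝ := ∑ A : ↥PP, tA A • LinearMap.proj A with hφtdef
    have hφt_apply : ∀ c : ↥PP → ℝ, φt c = ∑ A : ↥PP, tA A * c A := by
      intro c
      rw [hφtdef, LinearMap.sum_apply]
      exact Finset.sum_congr rfl (fun A _ => rfl)
    set Φ : ↥(St p D) →ₗ[ℝ] (↥PP → ℝ) := LinearMap.pi
      (fun A : ↥PP => (lA A (eA A))⁻¹ • ((LinearMap.proj (eA A) :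
        (Sym2 V → ℝ) →ₗ[ℝ] ℝ).comp (St p D).subtype)) with hΦdef
    have hΦ_apply : ∀ (x : ↥(St p D)) (A : ↥PP), Φ x A = x.1 (eA A) / lA A (eA A) := by
      intro x A
      rw [hΦdef, LinearMap.pi_apply]
      simp only [LinearMap.smul_apply, LinearMap.comp_apply, Submodule.coe_subtype,
        LinearMap.proj_apply, smul_eq_mul]
      rw [div_eq_inv_mul]
    have hΦinj : Function.Injective Φ := by
      rw [← LinearMap.ker_eq_bot, Submodule.eq_bot_iff]
      rintro x hx
      rw [LinearMap.mem_ker] at hx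
      have hx0 : ∀ A : ↥PP, x.1 (eA A) = 0 := by
        intro A
        have h1 := congrFun hx A
        rw [hΦ_apply x A] at h1
        have hlne := hlnz A (eA A) (heA A)
        rcases div_eq_zero_iff.mp h1 with h | h
        · exact h
        · exact absurd h hlne
      have hxv : x.1 = 0 := by
        funext e
        by_cases he : e ∈ D
        · obtain ⟨A, hA, heAmem⟩ := hcover e he
          rw [hc_eq x.1 x.2 ⟨A, hA⟩ e heAmem, hx0 ⟨A, hA⟩, zero_div, zero_mul]
          rfl
        · exact x.2.1 e he
      exact Subtype.ext hxv
    have hrangeEq : LinearMap.range Φ = LinearMap.ker φt := by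
      apply le_antisymm
      · rintro y ⟨x, rfl⟩
        rw [LinearMap.mem_ker, hφt_apply]
        calc ∑ A : ↥PP, tA A * Φ x A
            = ∑ A : ↥PP, (x.1 (eA A) / lA A (eA A)) * tA A :=
              Finset.sum_congr rfl (fun A _ => by rw [hΦ_apply]; ring)
          _ = 0 := hdecomp x.1 x.2
      · intro c hcmem
        rw [LinearMap.mem_ker, hφt_apply] at hcmem
        set y : Sym2 V → ℝ := ∑ A : ↥PP, c A • sA A with hydef
        have hysupp : ∀ e ∉ D, y e = 0 := by
          intro e he
          rw [hydef, Finset.sum_apply]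
          refine Finset.sum_eq_zero (fun A _ => ?_)
          have heA2 : e ∉ A.1 := fun h => he (hsubD A.2 h)
          simp only [Pi.smul_apply, smul_eq_mul, hsAdef]
          rw [if_neg heA2, mul_zero]
        have hyT : rigT p y = 0 := by
          rw [hydef, map_sum]
          have hterm : ∀ A : ↥PP, rigT p (c A • sA A)
              = (c A * tA A) • rigRow d p s(u, v) := by
            intro A
            rw [map_smul, hldir A, smul_smul]
          rw [Finset.sum_congr rfl (fun A _ => hterm A), ← Finset.sum_smul]
          have hsum0 : ∑ A : ↥PP, c A * tA A = 0 := by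
            rw [← hcmem]
            exact Finset.sum_congr rfl (fun A _ => mul_comm _ _)
          rw [hsum0, zero_smul]
        have hymem : y ∈ St p D := ⟨hysupp, hyT⟩
        refine ⟨⟨y, hymem⟩, ?_⟩
        funext A
        rw [hΦ_apply]
        have hval : y (eA A) = c A * lA A (eA A) := by
          rw [hydef, Finset.sum_apply, Finset.sum_eq_single A]
          · simp only [Pi.smul_apply, smul_eq_mul, hsAdef]
            rw [if_pos (heA A)]
          · intro b _ hb
            have hbA : eA A ∉ b.1 := by
              intro hcm
              have hbb : b.1 ≠ A.1 := fun h => hb (Subtype.ext h)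
              have hdd := hdisj b.2 A.2 hbb
              have hmm : eA A ∈ b.1 ∩ A.1 := Finset.mem_inter.mpr ⟨hcm, heA A⟩
              rw [hdd] at hmm
              exact absurd hmm (Finset.notMem_empty _)
            simp only [Pi.smul_apply, smul_eq_mul, hsAdef]
            rw [if_neg hbA, mul_zero]
          · intro h
            exact absurd (Finset.mem_univ A) h
        have hlne := hlnz A (eA A) (heA A)
        show y (eA A) / lA A (eA A) = c A
        rw [hval]
        field_simp
    have hDne : D.Nonempty := by
      rw [← Finset.card_pos]
      have := rank_nullity p D
      omega
    obtain ⟨f₁, hf₁⟩ := hDne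
    obtain ⟨A₁g, hA₁PP, -⟩ := hcover f₁ hf₁
    have hφtval : φt (Pi.single (⟨A₁g, hA₁PP⟩ : ↥PP) 1) = tA ⟨A₁g, hA₁PP⟩ := by
      rw [hφt_apply, Finset.sum_eq_single (⟨A₁g, hA₁PP⟩ : ↥PP)]
      · rw [Pi.single_eq_same, mul_one]
      · intro b _ hb
        rw [Pi.single_eq_of_ne hb, mul_zero]
      · intro h
        exact absurd (Finset.mem_univ _) h
    have hφtne : φt ≠ 0 := by
      intro hcn
      rw [hcn] at hφtval
      exact htne _ ((LinearMap.zero_apply _).symm.trans hφtval).symm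
    have hkeradd := LinearMap.finrank_range_add_finrank_ker φt
    have hranget : Module.finrank ℝ (LinearMap.range φt) = 1 := by
      have hne : LinearMap.range φt ≠ ⊥ := fun hcn => hφtne (LinearMap.range_eq_bot.mp hcn)
      have hle : Module.finrank ℝ (LinearMap.range φt) ≤ 1 := by
        simpa using Submodule.finrank_le (LinearMap.range φt)
      have h0 : Module.finrank ℝ (LinearMap.range φt) ≠ 0 := by
        rw [Ne, Submodule.finrank_eq_zero]
        exact hne
      omega
    have hfun : Module.finrank ℝ (↥PP → ℝ) = PP.card := by
      rw [Module.finrank_fintype_fun_eq_card, Fintype.card_coe]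
    have hrangeΦ : Module.finrank ℝ (LinearMap.range Φ) = k := by
      have h1 : Module.finrank ℝ ↥(St p D) = k := hDk0
      rw [← h1]
      exact (LinearEquiv.finrank_eq (LinearEquiv.ofInjective Φ hΦinj)).symm
    rw [hrangeEq] at hrangeΦ
    rw [hranget, hfun] at hkeradd
    omega
  -- circuit construction
  have hcirc : ∀ A : ↥PP, s(u, v) ∉ A.1 → IsCircuit d p (insert (s(u, v)) A.1) := by
    intro A huvA
    obtain ⟨κ, hκdef⟩ : ∃ κ : Sym2 V → ℝ,
        κ = sA A - tA A • (Pi.single (s(u, v)) (1 : ℝ) : Sym2 V → ℝ) := ⟨_, rfl⟩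
    have hκuv : κ (s(u, v)) = - tA A := by
      rw [hκdef]
      simp only [Pi.sub_apply, Pi.smul_apply, smul_eq_mul, Pi.single_eq_same, mul_one, hsAdef]
      rw [if_neg huvA, zero_sub]
    have hκA : ∀ e ∈ A.1, κ e = lA A e := by
      intro e he
      have hne2 : e ≠ s(u, v) := fun h => huvA (h ▸ he)
      rw [hκdef]
      simp only [Pi.sub_apply, Pi.smul_apply, smul_eq_mul, hsAdef]
      rw [if_pos he, Pi.single_eq_of_ne hne2, mul_zero, sub_zero]
    have hκ0 : ∀ e, e ∉ insert (s(u, v)) A.1 → κ e = 0 := by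
      intro e he
      rw [Finset.mem_insert] at he
      push_neg at he
      rw [hκdef]
      simp only [Pi.sub_apply, Pi.smul_apply, smul_eq_mul, hsAdef]
      rw [if_neg he.2, Pi.single_eq_of_ne he.1, mul_zero, sub_zero]
    have hκSt : κ ∈ St p (insert (s(u, v)) A.1) := by
      refine ⟨hκ0, ?_⟩
      show rigT p κ = 0
      rw [hκdef, map_sub, map_smul, hldir' A, rigT_single, sub_self]
    have hκne : κ ≠ 0 := by
      intro hcn
      have h1 := congrFun hcn (s(u, v))
      rw [hκuv] at h1
      exact htne A (neg_eq_zero.mp h1)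
    have hspan : St p (insert (s(u, v)) A.1) = Submodule.span ℝ {κ} := by
      apply le_antisymm
      · intro x hx
        have hx' : (x + (x (s(u, v)) / tA A) • κ) ∈ St p A.1 := by
          refine ⟨?_, ?_⟩
          · intro e he
            simp only [Pi.add_apply, Pi.smul_apply, smul_eq_mul]
            rcases eq_or_ne e (s(u, v)) with rfl | hne2
            · rw [hκuv]
              have := htne A
              field_simp
              ring
            · have hni : e ∉ insert (s(u, v)) A.1 := by
                rw [Finset.mem_insert]
                push_neg
                exact ⟨hne2, he⟩
              rw [hx.1 e hni, hκ0 e hni, mul_zero, add_zero]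
          · show rigT p _ = 0
            rw [map_add, map_smul, hx.2, hκSt.2, smul_zero, add_zero]
        rw [hStA A] at hx'
        have hx0 := (Submodule.mem_bot ℝ).mp hx'
        rw [add_eq_zero_iff_eq_neg] at hx0
        rw [hx0]
        exact Submodule.neg_mem _
          (Submodule.smul_mem _ _ (Submodule.mem_span_singleton_self κ))
      · rw [Submodule.span_le, Set.singleton_subset_iff]
        exact hκSt
    have hν1 : nuu p (insert (s(u, v)) A.1) = 1 := by
      rw [nuu, hspan]
      exact finrank_span_singleton hκne
    show IsKFoldCircuit d p (insert (s(u, v)) A.1) 1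
    rw [kfold_iff p]
    refine ⟨hν1, fun g hg => ⟨κ, hκSt, ?_⟩⟩
    rw [Finset.mem_insert] at hg
    rcases hg with rfl | hg
    · rw [hκuv]
      exact neg_ne_zero.mpr (htne A)
    · rw [hκA g hg]
      exact hlnz A g hg
  -- support intersections
  have hesupp_mem : ∀ (F : Finset (Sym2 V)) (w : V), w ∈ esupp F ↔ ∃ e ∈ F, w ∈ e := by
    intro F w
    constructor
    · intro h
      exact (Finset.mem_filter.mp h).2
    · intro h
      exact Finset.mem_filter.mpr ⟨Finset.mem_univ w, h⟩
  have hesupp_pair : ∀ (A A' : ↥PP), A ≠ A' →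
      esupp (insert (s(u, v)) A.1) ∩ esupp (insert (s(u, v)) A'.1) = {u, v} := by
    intro A A' hne
    have hAA' : A.1 ≠ A'.1 := fun h => hne (Subtype.ext h)
    ext w
    rw [Finset.mem_inter, hesupp_mem, hesupp_mem, Finset.mem_insert, Finset.mem_singleton]
    constructor
    · rintro ⟨⟨e1, he1, hwe1⟩, e2, he2, hwe2⟩
      by_contra hcon
      push_neg at hcon
      obtain ⟨hwu, hwv⟩ := hcon
      have hnotuv : ∀ e : Sym2 V, w ∈ e → e ≠ s(u, v) := by
        intro e hwe hcn
        rw [hcn, Sym2.mem_iff] at hwe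
        rcases hwe with h | h
        · exact hwu h
        · exact hwv h
      rw [Finset.mem_insert] at he1 he2
      have he1A : e1 ∈ A.1 := he1.resolve_left (fun h => hnotuv e1 hwe1 h)
      have he2A : e2 ∈ A'.1 := he2.resolve_left (fun h => hnotuv e2 hwe2 h)
      obtain ⟨Am, hAmPart, hAmall⟩ := hmono w hwu hwv
      have hAmPP : Am ∈ PP := hmemPP.mpr hAmPart
      have h1 : e1 ∈ Am := hAmall e1 (hsubD A.2 he1A) hwe1
      have h2 : e2 ∈ Am := hAmall e2 (hsubD A'.2 he2A) hwe2
      have hAm1 : Am = A.1 := by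
        by_contra hx
        have hdd := hdisj hAmPP A.2 hx
        have hmm : e1 ∈ Am ∩ A.1 := Finset.mem_inter.mpr ⟨h1, he1A⟩
        rw [hdd] at hmm
        exact absurd hmm (Finset.notMem_empty _)
      have hAm2 : Am = A'.1 := by
        by_contra hx
        have hdd := hdisj hAmPP A'.2 hx
        have hmm : e2 ∈ Am ∩ A'.1 := Finset.mem_inter.mpr ⟨h2, he2A⟩
        rw [hdd] at hmm
        exact absurd hmm (Finset.notMem_empty _)
      exact hAA' (hAm1.symm.trans hAm2)
    · intro h
      have hw : w ∈ s(u, v) := by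
        rw [Sym2.mem_iff]
        exact h
      exact ⟨⟨s(u, v), Finset.mem_insert_self _ _, hw⟩,
        ⟨s(u, v), Finset.mem_insert_self _ _, hw⟩⟩
  have hinter : ∀ (A A' : ↥PP), A ≠ A' →
      (insert (s(u, v)) A.1) ∩ (insert (s(u, v)) A'.1) = {s(u, v)} := by
    intro A A' hne
    have hAA' : A.1 ≠ A'.1 := fun h => hne (Subtype.ext h)
    have hd0 := hdisj A.2 A'.2 hAA'
    ext e
    simp only [Finset.mem_inter, Finset.mem_insert, Finset.mem_singleton]
    constructor
    · rintro ⟨h1 | h1, h2 | h2⟩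
      · exact h1
      · exact h1
      · exact h2
      · exfalso
        have : e ∈ A.1 ∩ A'.1 := Finset.mem_inter.mpr ⟨h1, h2⟩
        rw [hd0] at this
        exact absurd this (Finset.notMem_empty e)
    · rintro rfl
      exact ⟨Or.inl rfl, Or.inl rfl⟩
  constructor
  · -- case (i) : uv ∈ D
    intro huvD
    obtain ⟨A₀, hA₀PP, huvA₀⟩ := hcover (s(u, v)) huvD
    have hA₀eq : A₀ = {s(u, v)} := by
      have hκ₀St : (sA ⟨A₀, hA₀PP⟩ - tA ⟨A₀, hA₀PP⟩ •
          (Pi.single (s(u, v)) (1 : ℝ) : Sym2 V → ℝ)) ∈ St p A₀ := by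
        refine ⟨?_, ?_⟩
        · intro e he
          have hne2 : e ≠ s(u, v) := fun h => he (h ▸ huvA₀)
          simp only [Pi.sub_apply, Pi.smul_apply, smul_eq_mul, hsAdef]
          rw [if_neg he, Pi.single_eq_of_ne hne2, mul_zero, sub_zero]
        · show rigT p _ = 0
          rw [map_sub, map_smul, hldir' ⟨A₀, hA₀PP⟩, rigT_single, sub_self]
      rw [hStA ⟨A₀, hA₀PP⟩] at hκ₀St
      have h0 := (Submodule.mem_bot ℝ).mp hκ₀St
      apply Finset.Subset.antisymm
      · intro e he
        rw [Finset.mem_singleton]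
        by_contra hne2
        have h1 := congrFun h0 e
        simp only [Pi.sub_apply, Pi.smul_apply, smul_eq_mul, Pi.zero_apply, hsAdef] at h1
        rw [if_pos he, Pi.single_eq_of_ne hne2, mul_zero, sub_zero] at h1
        exact hlnz ⟨A₀, hA₀PP⟩ e he h1
      · rw [Finset.singleton_subset_iff]
        exact huvA₀
    have hcard' : (PP.erase A₀).card = k := by
      rw [Finset.card_erase_of_mem hA₀PP, hcard]
      omega
    have henum := Finset.equivFinOfCardEq hcard'
    have hmemE : ∀ i : Fin k, ((henum.symm i : ↥(PP.erase A₀)) : Finset (Sym2 V)) ∈ PP ∧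
        ((henum.symm i : ↥(PP.erase A₀)) : Finset (Sym2 V)) ≠ A₀ := by
      intro i
      have h1 := (henum.symm i).2
      exact ⟨Finset.mem_of_mem_erase h1, Finset.ne_of_mem_erase h1⟩
    have huvnot : ∀ i : Fin k,
        s(u, v) ∉ ((henum.symm i : ↥(PP.erase A₀)) : Finset (Sym2 V)) := by
      intro i hcmem
      obtain ⟨hPPm, hneq⟩ := hmemE i
      have hdd := hdisj hPPm hA₀PP hneq
      have hmm : s(u, v) ∈ ((henum.symm i : ↥(PP.erase A₀)) : Finset (Sym2 V)) ∩ A₀ :=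
        Finset.mem_inter.mpr ⟨hcmem, huvA₀⟩
      rw [hdd] at hmm
      exact absurd hmm (Finset.notMem_empty _)
    have hinj2 : ∀ i j : Fin k, i ≠ j →
        (⟨((henum.symm i : ↥(PP.erase A₀)) : Finset (Sym2 V)), (hmemE i).1⟩ : ↥PP) ≠
        ⟨((henum.symm j : ↥(PP.erase A₀)) : Finset (Sym2 V)), (hmemE j).1⟩ := by
      intro i j hij hcn
      apply hij
      rw [Subtype.mk.injEq] at hcn
      exact henum.symm.injective (Subtype.ext hcn)
    refine ⟨fun i => insert (s(u, v)) ((henum.symm i : ↥(PP.erase A₀)) : Finset (Sym2 V)),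
      ?_, ?_, ?_⟩
    · intro i
      have h1 := hcirc ⟨((henum.symm i : ↥(PP.erase A₀)) : Finset (Sym2 V)), (hmemE i).1⟩
        (huvnot i)
      exact ⟨h1, Finset.mem_insert_self _ _⟩
    · intro i j hij
      have h2 := hesupp_pair _ _ (hinj2 i j hij)
      have h3 := hinter _ _ (hinj2 i j hij)
      exact ⟨h2, h3⟩
    · apply Finset.Subset.antisymm
      · intro e he
        rw [Finset.mem_sup]
        obtain ⟨A, hAPP, heA2⟩ := hcover e he
        by_cases hA0 : A = A₀
        · have heuv : e = s(u, v) := by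
            rw [hA0, hA₀eq, Finset.mem_singleton] at heA2
            exact heA2
          have hk0 : 0 < k := by omega
          refine ⟨⟨0, hk0⟩, Finset.mem_univ _, ?_⟩
          rw [heuv]
          exact Finset.mem_insert_self _ _
        · have hmemEr : A ∈ PP.erase A₀ := Finset.mem_erase.mpr ⟨hA0, hAPP⟩
          refine ⟨henum ⟨A, hmemEr⟩, Finset.mem_univ _, ?_⟩
          simp only [Equiv.symm_apply_apply]
          exact Finset.mem_insert_of_mem heA2
      · intro e he
        rw [Finset.mem_sup] at he
        obtain ⟨i, -, hei⟩ := he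
        rcases Finset.mem_insert.mp hei with rfl | h
        · exact huvD
        · exact hsubD (hmemE i).1 h
  · -- case (ii) : uv ∉ D
    intro huvD
    have huvnot : ∀ A : ↥PP, s(u, v) ∉ A.1 := fun A hc => huvD (hsubD A.2 hc)
    have henum := Finset.equivFinOfCardEq hcard
    refine ⟨fun i => insert (s(u, v)) ((henum.symm i : ↥PP) : Finset (Sym2 V)),
      ?_, ?_, ?_⟩
    · intro i
      exact ⟨hcirc _ (huvnot _), Finset.mem_insert_self _ _⟩
    · intro i j hij
      have hne2 : (henum.symm i : ↥PP) ≠ henum.symm j :=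
        fun h => hij (henum.symm.injective h)
      exact ⟨hesupp_pair _ _ hne2, hinter _ _ hne2⟩
    · apply Finset.Subset.antisymm
      · intro e he
        obtain ⟨A, hAPP, heA2⟩ := hcover e he
        refine Finset.mem_erase.mpr ⟨fun h => huvD (h ▸ he), ?_⟩
        rw [Finset.mem_sup]
        refine ⟨henum ⟨A, hAPP⟩, Finset.mem_univ _, ?_⟩
        simp only [Equiv.symm_apply_apply]
        exact Finset.mem_insert_of_mem heA2
      · intro e he
        rw [Finset.mem_erase, Finset.mem_sup] at he
        obtain ⟨hne2, i, -, hei⟩ := he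
        rcases Finset.mem_insert.mp hei with rfl | h
        · exact absurd rfl hne2
        · exact hsubD (henum.symm i).2 h
end

section
/- Let d ≥ 1 and k ≥ 1, let G = (V,D) be a graph with no isolated vertices whose edge set D is a k-fold R_d-circuit, and let G*v be the cone of G over a new vertex v, so that E(G*v) is a k-fold R_{d+1}-circuit. If all edges of G*v incident to v belong to the same part of the principal partition of E(G*v), then k = 1. -/
open scoped BigOperators

namespace ConeAux

open Finset Submodule

variable {V : Type*} [Fintype V] [DecidableEq V]

theorem rigRow_mk (d : ℕ) (p : V → Fin d → ℝ) (u v : V) (wi : V × Fin d) :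
    rigRow d p s(u, v) wi =
      ((if wi.1 = u then (1 : ℝ) else 0) - (if wi.1 = v then (1 : ℝ) else 0)) *
        (p u wi.2 - p v wi.2) := by
  simp [rigRow]

theorem rrk_mono (d : ℕ) (p : V → Fin d → ℝ) {F₁ F₂ : Set (Sym2 V)} (h : F₁ ⊆ F₂) :
    rrk d p F₁ ≤ rrk d p F₂ :=
  Submodule.finrank_mono (span_mono (Set.image_mono h))

theorem rrk_le_card (d : ℕ) (p : V → Fin d → ℝ) (F : Finset (Sym2 V)) :
    rrk d p ↑F ≤ F.card := by
  classical
  have h1 : rigRow d p '' ↑F = ↑(F.image (rigRow d p)) := by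
    rw [Finset.coe_image]
  rw [rrk, h1]
  exact (finrank_span_finset_le_card _).trans Finset.card_image_le

theorem rrk_union_le (d : ℕ) (p : V → Fin d → ℝ) (F₁ F₂ : Finset (Sym2 V)) :
    rrk d p ↑(F₁ ∪ F₂) ≤ rrk d p ↑F₁ + F₂.card := by
  classical
  have h1 : rigRow d p '' ↑(F₁ ∪ F₂) = rigRow d p '' ↑F₁ ∪ rigRow d p '' ↑F₂ := by
    rw [Finset.coe_union, Set.image_union]
  have h2 : Submodule.span ℝ (rigRow d p '' ↑(F₁ ∪ F₂)) =
      Submodule.span ℝ (rigRow d p '' ↑F₁) ⊔ Submodule.span ℝ (rigRow d p '' ↑F₂) := by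
    rw [h1, Submodule.span_union]
  have h3 := Submodule.finrank_sup_add_finrank_inf_eq
    (Submodule.span ℝ (rigRow d p '' ↑F₁)) (Submodule.span ℝ (rigRow d p '' ↑F₂))
  have h4 : rrk d p ↑F₂ ≤ F₂.card := rrk_le_card d p F₂
  simp only [rrk] at h4 ⊢
  rw [h2]
  omega

theorem rrk_coe_of_linearIndependent {d : ℕ} {p : V → Fin d → ℝ} {F : Finset (Sym2 V)}
    (h : LinearIndependent ℝ (fun e : ↑F => rigRow d p ↑e)) :
    rrk d p ↑F = F.card := by
  have hr : Set.range (fun e : ↑F => rigRow d p ↑e) = rigRow d p '' ↑F := by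
    rw [show (fun e : ↑F => rigRow d p ↑e) = (rigRow d p) ∘ (fun e : ↑F => (e : Sym2 V)) from rfl,
      Set.range_comp, Subtype.range_coe_subtype]
    rfl
  rw [rrk, ← hr, finrank_span_eq_card h, Fintype.card_coe]

theorem exists_subbasis (d : ℕ) (p : V → Fin d → ℝ) (F : Finset (Sym2 V)) :
    ∃ I ⊆ F, I.card = rrk d p ↑F ∧ LinearIndependent ℝ (fun e : ↑I => rigRow d p ↑e) := by
  classical
  induction F using Finset.strongInduction with
  | _ F ih =>
    by_cases hF : LinearIndependent ℝ (fun e : ↑F => rigRow d p ↑e)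
    · exact ⟨F, Finset.Subset.refl F, (rrk_coe_of_linearIndependent hF).symm, hF⟩
    · obtain ⟨g, hg0, i₀, hi₀⟩ := Fintype.not_linearIndependent_iff.mp hF
      have hmem : rigRow d p (↑i₀ : Sym2 V) ∈
          Submodule.span ℝ (rigRow d p '' ↑(F.erase ↑i₀)) := by
        have h1 : g i₀ • rigRow d p (↑i₀ : Sym2 V) +
            ∑ i ∈ Finset.univ.erase i₀, g i • rigRow d p (↑i : Sym2 V) = 0 := by
          have heq := Finset.add_sum_erase Finset.univ
            (fun i => g i • rigRow d p (↑i : Sym2 V)) (Finset.mem_univ i₀)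
          rw [heq]
          exact hg0
        have h2 : g i₀ • rigRow d p (↑i₀ : Sym2 V) =
            - ∑ i ∈ Finset.univ.erase i₀, g i • rigRow d p (↑i : Sym2 V) :=
          eq_neg_of_add_eq_zero_left h1
        have h3 : g i₀ • rigRow d p (↑i₀ : Sym2 V) ∈
            Submodule.span ℝ (rigRow d p '' ↑(F.erase ↑i₀)) := by
          rw [h2]
          refine Submodule.neg_mem _ ?_
          refine Submodule.sum_mem _ (fun i hi => Submodule.smul_mem _ _ (Submodule.subset_span ?_))
          refine ⟨↑i, ?_, rfl⟩
          rw [Finset.coe_erase]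
          refine ⟨i.2, ?_⟩
          simp only [Set.mem_singleton_iff]
          intro hcontr
          exact (Finset.mem_erase.mp hi).1 (Subtype.ext hcontr)
        have h4 := Submodule.smul_mem _ (g i₀)⁻¹ h3
        rwa [inv_smul_smul₀ hi₀] at h4
      have hspan : Submodule.span ℝ (rigRow d p '' ↑F) =
          Submodule.span ℝ (rigRow d p '' ↑(F.erase ↑i₀)) := by
        have hins : (↑F : Set (Sym2 V)) = insert (↑i₀ : Sym2 V) ↑(F.erase ↑i₀) := by
          rw [← Finset.coe_insert, Finset.insert_erase i₀.2]
        rw [hins, Set.image_insert_eq, Submodule.span_insert_eq_span hmem]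
      obtain ⟨I, hIsub, hIcard, hIind⟩ := ih _ (Finset.erase_ssubset i₀.2)
      refine ⟨I, hIsub.trans (Finset.erase_subset _ _), ?_, hIind⟩
      rw [hIcard, rrk, rrk, hspan]

set_option linter.unusedSectionVars false

noncomputable def zeta (z : V → ℝ) (e : Sym2 V) (w : V) : ℝ :=
  Sym2.lift
    ⟨fun u v => ((if w = u then (1 : ℝ) else 0) - (if w = v then (1 : ℝ) else 0)) * (z u - z v),
      fun u v => by ring⟩ e

theorem zeta_mk (z : V → ℝ) (u v w : V) :
    zeta z s(u, v) w =
      ((if w = u then (1 : ℝ) else 0) - (if w = v then (1 : ℝ) else 0)) * (z u - z v) := by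
  simp [zeta]

theorem zeta_add (z z' : V → ℝ) (e : Sym2 V) (w : V) :
    zeta (z + z') e w = zeta z e w + zeta z' e w := by
  induction e using Sym2.inductionOn with
  | hf u v => simp only [zeta_mk, Pi.add_apply]; ring

theorem zeta_smul (a : ℝ) (z : V → ℝ) (e : Sym2 V) (w : V) :
    zeta (a • z) e w = a * zeta z e w := by
  induction e using Sym2.inductionOn with
  | hf u v => simp only [zeta_mk, Pi.smul_apply, smul_eq_mul]; ring

noncomputable def delta (x : V) : V → ℝ := fun u => if u = x then 1 else 0

theorem zeta_delta {x w : V} (hwx : w ≠ x) (g : Sym2 V) :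
    zeta (delta x) g w = if g = s(x, w) then (-1 : ℝ) else 0 := by
  induction g using Sym2.inductionOn with
  | hf u v =>
    rw [zeta_mk]
    by_cases h1 : w = u <;> by_cases h2 : w = v <;> by_cases h3 : u = x <;> by_cases h4 : v = x <;>
      simp_all [delta, Sym2.eq_iff] <;>
      first
      | ring1
      | exact (if_neg (by rintro rfl; simp_all)).symm
      | (rw [if_pos (by simp_all)]; ring)
      | exact fun h => by simp_all

theorem rigRow_snoc_castSucc (d : ℕ) (p : V → Fin d → ℝ) (z : V → ℝ) (e : Sym2 V) (w : V)
    (j : Fin d) :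
    rigRow (d+1) (fun v => Fin.snoc (p v) (z v)) e (w, j.castSucc) = rigRow d p e (w, j) := by
  induction e using Sym2.inductionOn with
  | hf u v => simp [rigRow_mk, Fin.snoc_castSucc]

theorem rigRow_snoc_last (d : ℕ) (p : V → Fin d → ℝ) (z : V → ℝ) (e : Sym2 V) (w : V) :
    rigRow (d+1) (fun v => Fin.snoc (p v) (z v)) e (w, Fin.last d) = zeta z e w := by
  induction e using Sym2.inductionOn with
  | hf u v => simp [rigRow_mk, zeta_mk, Fin.snoc_last]

noncomputable def Phi (G : Finset (Sym2 V)) (lam : Sym2 V → ℝ) (z : V → ℝ) (w : V) : ℝ :=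
  ∑ g ∈ G, lam g * zeta z g w

def StressD (d : ℕ) (p : V → Fin d → ℝ) (G : Finset (Sym2 V)) (lam : Sym2 V → ℝ) : Prop :=
  ∀ wi : V × Fin d, ∑ g ∈ G, lam g * rigRow d p g wi = 0

theorem Phi_comb (G : Finset (Sym2 V)) (a b : ℝ) (l₁ l₂ : Sym2 V → ℝ) (z : V → ℝ) (w : V) :
    Phi G (a • l₁ + b • l₂) z w = a * Phi G l₁ z w + b * Phi G l₂ z w := by
  simp only [Phi, Pi.add_apply, Pi.smul_apply, smul_eq_mul, add_mul, Finset.sum_add_distrib,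
    Finset.mul_sum, mul_assoc]

theorem aux_solve {W : Type*} [AddCommGroup W] [Module ℝ W] {t c : ℝ} (ht : t ≠ 0) {x y : W}
    (h : t • x = c • y) : x = (t⁻¹ * c) • y := by
  have h2 := congrArg (fun v => (t⁻¹ : ℝ) • v) h
  simp only [smul_smul, inv_mul_cancel₀ ht, one_smul] at h2
  exact h2

/-- Pencil lemma: two linear maps whose values are pointwise linearly dependent either have a
common kernel direction or take all their values on a single line. -/
theorem pencil {Z W : Type*} [AddCommGroup Z] [Module ℝ Z] [AddCommGroup W] [Module ℝ W]
    (v₁ v₂ : Z →ₗ[ℝ] W)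
    (hdep : ∀ z, ∃ a b : ℝ, (a ≠ 0 ∨ b ≠ 0) ∧ a • v₁ z + b • v₂ z = 0) :
    (∃ a b : ℝ, (a ≠ 0 ∨ b ≠ 0) ∧ ∀ z, a • v₁ z + b • v₂ z = 0) ∨
    (∃ c : W, c ≠ 0 ∧ ∀ z, (∃ t : ℝ, v₁ z = t • c) ∧ ∃ t : ℝ, v₂ z = t • c) := by
  by_cases h1 : ∀ z, v₁ z = 0
  · exact Or.inl ⟨1, 0, Or.inl one_ne_zero, fun z => by simp [h1 z]⟩
  push_neg at h1
  obtain ⟨z₁, hz₁⟩ := h1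
  obtain ⟨a, b, hab, habe⟩ := hdep z₁
  have hb : b ≠ 0 := by
    rintro rfl
    rcases hab with ha | ha
    · apply hz₁
      have h0 : a • v₁ z₁ = 0 := by simpa using habe
      exact (smul_eq_zero.mp h0).resolve_left ha
    · exact ha rfl
  have hμ0 : b • v₂ z₁ = (-a) • v₁ z₁ := by
    rw [neg_smul, eq_neg_iff_add_eq_zero, add_comm]; exact habe
  have hμ : v₂ z₁ = (b⁻¹ * (-a)) • v₁ z₁ := aux_solve hb hμ0
  set μ : ℝ := b⁻¹ * (-a) with hμdef
  set w : Z →ₗ[ℝ] W := v₂ - μ • v₁ with hwdef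
  have hwz : ∀ z, w z = v₂ z - μ • v₁ z := fun z => rfl
  have hw₁ : w z₁ = 0 := by rw [hwz, hμ, sub_self]
  have hdep' : ∀ z, ∃ a' b' : ℝ, (a' ≠ 0 ∨ b' ≠ 0) ∧ a' • v₁ z + b' • w z = 0 := by
    intro z
    obtain ⟨a', b', hab', he'⟩ := hdep z
    refine ⟨a' + b' * μ, b', ?_, ?_⟩
    · rcases hab' with h | h
      · by_cases hb' : b' = 0
        · left; simpa [hb'] using h
        · right; exact hb'
      · right; exact h
    · rw [hwz]
      have hgoal : (a' + b' * μ) • v₁ z + b' • (v₂ z - μ • v₁ z)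
          = a' • v₁ z + b' • v₂ z := by module
      rw [hgoal, he']
  have key : ∀ ξ, w ξ ≠ 0 →
      (∃ γ : ℝ, γ ≠ 0 ∧ w ξ = γ • v₁ z₁) ∧ (∃ s : ℝ, v₁ ξ = s • v₁ z₁) := by
    intro ξ hξ
    obtain ⟨a1, b1, hab1, he1⟩ := hdep' (z₁ + ξ)
    obtain ⟨a2, b2, hab2, he2⟩ := hdep' (z₁ - ξ)
    rw [map_add, map_add, hw₁, zero_add] at he1
    rw [map_sub, map_sub, hw₁, zero_sub] at he2
    have ha1 : a1 ≠ 0 := by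
      rintro rfl
      rcases hab1 with h | h
      · exact h rfl
      · apply hξ
        have h0 : b1 • w ξ = 0 := by simpa using he1
        exact (smul_eq_zero.mp h0).resolve_left h
    have ha2 : a2 ≠ 0 := by
      rintro rfl
      rcases hab2 with h | h
      · exact h rfl
      · apply hξ
        have h0 : b2 • w ξ = 0 := by
          have h0' := he2
          simp only [zero_smul, zero_add, smul_neg, neg_eq_zero] at h0'
          exact h0'
        exact (smul_eq_zero.mp h0).resolve_left h
    have h1 : v₁ z₁ + v₁ ξ = (a1⁻¹ * (-b1)) • w ξ := by
      refine aux_solve ha1 ?_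
      rw [neg_smul, eq_neg_iff_add_eq_zero]; exact he1
    have h2 : v₁ z₁ - v₁ ξ = (a2⁻¹ * b2) • w ξ := by
      refine aux_solve ha2 ?_
      rw [smul_neg, add_neg_eq_zero] at he2; exact he2
    set s1 : ℝ := a1⁻¹ * (-b1) with hs1
    set s2 : ℝ := a2⁻¹ * b2 with hs2
    have hsum : (2 : ℝ) • v₁ z₁ = (s1 + s2) • w ξ := by
      calc (2 : ℝ) • v₁ z₁ = (v₁ z₁ + v₁ ξ) + (v₁ z₁ - v₁ ξ) := by module
      _ = s1 • w ξ + s2 • w ξ := by rw [h1, h2]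
      _ = (s1 + s2) • w ξ := by module
    have hdiff : (2 : ℝ) • v₁ ξ = (s1 - s2) • w ξ := by
      calc (2 : ℝ) • v₁ ξ = (v₁ z₁ + v₁ ξ) - (v₁ z₁ - v₁ ξ) := by module
      _ = s1 • w ξ - s2 • w ξ := by rw [h1, h2]
      _ = (s1 - s2) • w ξ := by module
    have hT : s1 + s2 ≠ 0 := by
      intro h0
      rw [h0, zero_smul] at hsum
      rcases smul_eq_zero.mp hsum with h | h
      · norm_num at h
      · exact hz₁ h
    have hwξ : w ξ = ((s1 + s2)⁻¹ * 2) • v₁ z₁ := aux_solve hT hsum.symm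
    have hγ0 : (s1 + s2)⁻¹ * 2 ≠ 0 := mul_ne_zero (inv_ne_zero hT) two_ne_zero
    refine ⟨⟨_, hγ0, hwξ⟩, ?_⟩
    have hv : v₁ ξ = ((2:ℝ)⁻¹ * (s1 - s2)) • w ξ := aux_solve two_ne_zero hdiff
    rw [hwξ, smul_smul] at hv
    exact ⟨_, hv⟩
  by_cases h2 : ∀ ξ, w ξ = 0
  · left
    refine ⟨μ, -1, Or.inr (by norm_num), fun z => ?_⟩
    have h0 := h2 z
    rw [hwz, sub_eq_zero] at h0
    rw [← h0]
    module
  push_neg at h2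
  obtain ⟨ξ₀, hξ₀⟩ := h2
  obtain ⟨⟨γ, hγ0, hγ⟩, ⟨s₀, hs₀⟩⟩ := key ξ₀ hξ₀
  right
  refine ⟨v₁ z₁, hz₁, fun ζ => ?_⟩
  have hwzeta : ∀ ζ', ∃ e : ℝ, w ζ' = e • v₁ z₁ := by
    intro ζ'
    by_cases h : w ζ' = 0
    · exact ⟨0, by rw [h, zero_smul]⟩
    · obtain ⟨⟨γ', _, hγ'⟩, _⟩ := key ζ' h
      exact ⟨γ', hγ'⟩
  obtain ⟨e, he⟩ := hwzeta ζ
  have htex : ∃ t : ℝ, t ≠ 0 ∧ γ + t * e ≠ 0 := by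
    by_cases h : γ + e = 0
    · refine ⟨-1, by norm_num, ?_⟩
      have he' : e = -γ := by linarith
      rw [he']
      intro h0
      apply hγ0
      nlinarith [h0]
    · exact ⟨1, one_ne_zero, by simpa using h⟩
  obtain ⟨t, ht0, hte⟩ := htex
  have hwne : w (ξ₀ + t • ζ) ≠ 0 := by
    rw [map_add, map_smul, hγ, he, smul_smul, ← add_smul]
    exact smul_ne_zero hte hz₁
  obtain ⟨_, s, hs⟩ := key _ hwne
  rw [map_add, map_smul, hs₀] at hs
  have hv1 : v₁ ζ = (t⁻¹ * (s - s₀)) • v₁ z₁ := by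
    refine aux_solve ht0 ?_
    rw [sub_smul, ← hs]
    module
  refine ⟨⟨_, hv1⟩, ⟨e + μ * (t⁻¹ * (s - s₀)), ?_⟩⟩
  have hv2 : v₂ ζ = w ζ + μ • v₁ ζ := by rw [hwz]; module
  rw [hv2, he, hv1, smul_smul, ← add_smul]

theorem Phi_delta {G : Finset (Sym2 V)} {lam : Sym2 V → ℝ}
    (hsupp : ∀ g, lam g ≠ 0 → g ∈ G) {x w : V} (hwx : w ≠ x) :
    Phi G lam (delta x) w = - lam s(x, w) := by
  rw [Phi, Finset.sum_eq_single s(x, w)]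
  · rw [zeta_delta hwx, if_pos rfl]; ring
  · intro g _ hne
    rw [zeta_delta hwx, if_neg hne, mul_zero]
  · intro hnot
    have h0 : lam s(x, w) = 0 := by
      by_contra h
      exact hnot (hsupp _ h)
    simp [h0]

theorem eq_zero_of_phi_zero {G : Finset (Sym2 V)} (hnd : ∀ e ∈ G, ¬ e.IsDiag)
    {lam : Sym2 V → ℝ} (hsupp : ∀ g, lam g ≠ 0 → g ∈ G)
    (h : ∀ z w, Phi G lam z w = 0) : lam = 0 := by
  have key : ∀ a b : V, lam s(a, b) = 0 := by
    intro a b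
    by_cases hab : a = b
    · subst hab
      by_contra hne
      exact hnd _ (hsupp _ hne) (Sym2.mk_isDiag_iff.mpr rfl)
    · have h1 := Phi_delta hsupp (x := a) (w := b) (fun h0 => hab h0.symm)
      rw [h (delta a) b] at h1
      linarith
  funext g
  induction g using Sym2.inductionOn with
  | hf a b => simpa using key a b

theorem rank1_structure {G : Finset (Sym2 V)} {lam : Sym2 V → ℝ}
    (hsupp : ∀ g, lam g ≠ 0 → g ∈ G) {c : V → ℝ} (hc : c ≠ 0)
    (h : ∀ z, ∃ t : ℝ, (fun w => Phi G lam z w) = t • c) :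
    ∃ κ : ℝ, ∀ x w : V, x ≠ w → lam s(x, w) = κ * (c x * c w) := by
  choose t ht using h
  have hE : ∀ x w : V, w ≠ x → lam s(x, w) = -(t (delta x) * c w) := by
    intro x w hwx
    have h1 : Phi G lam (delta x) w = t (delta x) * c w := by
      have h2 := congrFun (ht (delta x)) w
      simpa using h2
    have h2 := Phi_delta hsupp hwx
    rw [h1] at h2
    linarith
  obtain ⟨x₁, hx₁⟩ : ∃ x, c x ≠ 0 := by
    by_contra h0
    push_neg at h0
    exact hc (funext h0)
  refine ⟨-(t (delta x₁)) / c x₁, ?_⟩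
  have hsym : ∀ x wv : V, wv ≠ x → t (delta x) * c wv = t (delta wv) * c x := by
    intro x wv hwx
    have h1 := hE x wv hwx
    have h2 := hE wv x (fun h0 => hwx h0.symm)
    rw [Sym2.eq_swap] at h2
    rw [h1] at h2
    linarith
  intro x w hxw
  have hx : t (delta x) * c x₁ = t (delta x₁) * c x := by
    by_cases hxx : x = x₁
    · subst hxx; ring
    · exact hsym x x₁ (fun h0 => hxx h0.symm)
  have h1 := hE x w (fun h0 => hxw h0.symm)
  have h2 : t (delta x) = t (delta x₁) * c x / c x₁ := by
    field_simp
    linarith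
  rw [h1, h2]
  field_simp

theorem keyLemma (d : ℕ) (p : V → Fin d → ℝ) (I J : Finset (Sym2 V))
    (hdisj : Disjoint I J) (hJcard : J.card ≤ 2)
    (hnd : ∀ e ∈ I ∪ J, ¬ e.IsDiag)
    (hI : LinearIndependent ℝ (fun e : ↑I => rigRow d p ↑e)) :
    ∃ z : V → ℝ, LinearIndependent ℝ
      (fun e : ↑(I ∪ J) => rigRow (d+1) (fun v => Fin.snoc (p v) (z v)) ↑e) := by
  classical
  by_contra hcon
  push_neg at hcon
  have main : ∀ z : V → ℝ, ∃ lam : Sym2 V → ℝ, lam ≠ 0 ∧ (∀ g, lam g ≠ 0 → g ∈ I ∪ J) ∧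
      StressD d p (I ∪ J) lam ∧ (∀ w, Phi (I ∪ J) lam z w = 0) := by
    intro z
    have hz : ¬ LinearIndependent ℝ
        (fun e : ↑(I ∪ J) => rigRow (d+1) (fun v => Fin.snoc (p v) (z v)) ↑e) := hcon z
    obtain ⟨g, hgsum, i₀, hi₀⟩ := Fintype.not_linearIndependent_iff.mp hz
    set lam : Sym2 V → ℝ := fun e => if h : e ∈ I ∪ J then g ⟨e, h⟩ else 0 with hlam
    have hlam_coe : ∀ i : ↑(I ∪ J), lam ↑i = g i := by
      intro i
      have h0 : lam ↑i = if h : (↑i : Sym2 V) ∈ I ∪ J then g ⟨↑i, h⟩ else 0 := rfl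
      rw [h0, dif_pos i.2]
    have hsum' : ∀ (f : Sym2 V → ℝ),
        (∑ e ∈ I ∪ J, lam e * f e) = ∑ i : ↑(I ∪ J), g i * f ↑i := by
      intro f
      rw [← Finset.sum_coe_sort (I ∪ J) (fun e => lam e * f e)]
      exact Finset.sum_congr rfl (fun i _ => by rw [hlam_coe i])
    refine ⟨lam, ?_, ?_, ?_, ?_⟩
    · have h1 : lam ↑i₀ ≠ 0 := by rw [hlam_coe i₀]; exact hi₀
      intro h0
      rw [h0] at h1
      simp at h1
    · intro g' hg'
      by_contra hng
      have h0 : lam g' = if h : g' ∈ I ∪ J then g ⟨g', h⟩ else 0 := rfl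
      rw [h0, dif_neg hng] at hg'
      exact hg' rfl
    · rintro ⟨w, j⟩
      have h1 := congrFun hgsum (w, j.castSucc)
      simp only [Finset.sum_apply, Pi.smul_apply, smul_eq_mul, Pi.zero_apply] at h1
      rw [hsum' (fun e => rigRow d p e (w, j)), ← h1]
      exact Finset.sum_congr rfl (fun i _ => by rw [rigRow_snoc_castSucc])
    · intro w
      have h1 := congrFun hgsum (w, Fin.last d)
      simp only [Finset.sum_apply, Pi.smul_apply, smul_eq_mul, Pi.zero_apply] at h1
      rw [Phi, hsum' (fun e => zeta z e w), ← h1]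
      exact Finset.sum_congr rfl (fun i _ => by rw [rigRow_snoc_last])
  have injJ : ∀ lam : Sym2 V → ℝ, (∀ g, lam g ≠ 0 → g ∈ I ∪ J) → StressD d p (I ∪ J) lam →
      (∀ e ∈ J, lam e = 0) → lam = 0 := by
    intro lam hsupp hstress hJ0
    have hIsum : (∑ i : ↑I, lam ↑i • (fun e : ↑I => rigRow d p ↑e) i) = 0 := by
      funext wi
      simp only [Finset.sum_apply, Pi.smul_apply, smul_eq_mul, Pi.zero_apply]
      have hs := hstress wi
      rw [Finset.sum_union hdisj] at hs
      have hJz : ∑ g ∈ J, lam g * rigRow d p g wi = 0 :=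
        Finset.sum_eq_zero (fun g hg => by rw [hJ0 g hg, zero_mul])
      rw [hJz, add_zero] at hs
      rw [Finset.sum_coe_sort I (fun g => lam g * rigRow d p g wi)]
      exact hs
    have hI0 := Fintype.linearIndependent_iff.mp hI (fun i => lam ↑i) hIsum
    funext e
    simp only [Pi.zero_apply]
    by_contra hne
    rcases Finset.mem_union.mp (hsupp e hne) with h | h
    · exact hne (hI0 ⟨e, h⟩)
    · exact hne (hJ0 e h)
  have supp_comb : ∀ (a b : ℝ) (la lb : Sym2 V → ℝ), (∀ g, la g ≠ 0 → g ∈ I ∪ J) →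
      (∀ g, lb g ≠ 0 → g ∈ I ∪ J) → ∀ g, (a • la + b • lb) g ≠ 0 → g ∈ I ∪ J := by
    intro a b la lb h1 h2 g hg
    by_contra hng
    apply hg
    have hla : la g = 0 := by by_contra h; exact hng (h1 g h)
    have hlb : lb g = 0 := by by_contra h; exact hng (h2 g h)
    simp [hla, hlb]
  have stress_comb : ∀ (a b : ℝ) (la lb : Sym2 V → ℝ), StressD d p (I ∪ J) la →
      StressD d p (I ∪ J) lb → StressD d p (I ∪ J) (a • la + b • lb) := by
    intro a b la lb hla hlb wi
    have h0 : ∑ g ∈ I ∪ J, (a • la + b • lb) g * rigRow d p g wi =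
        a * (∑ g ∈ I ∪ J, la g * rigRow d p g wi) + b * (∑ g ∈ I ∪ J, lb g * rigRow d p g wi) := by
      rw [Finset.mul_sum, Finset.mul_sum, ← Finset.sum_add_distrib]
      refine Finset.sum_congr rfl (fun g _ => ?_)
      simp only [Pi.add_apply, Pi.smul_apply, smul_eq_mul]
      ring
    rw [h0, hla wi, hlb wi]
    ring
  obtain ⟨l₁, hl₁ne, hl₁supp, hl₁stress, _⟩ := main 0
  by_cases hPhi1 : ∀ z w, Phi (I ∪ J) l₁ z w = 0
  · exact hl₁ne (eq_zero_of_phi_zero hnd hl₁supp hPhi1)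
  push_neg at hPhi1
  obtain ⟨ζ, w₀, hζ⟩ := hPhi1
  obtain ⟨l₂, hl₂ne, hl₂supp, hl₂stress, hl₂phi⟩ := main ζ
  have Phi_mul : ∀ (cc : ℝ) (la lb : Sym2 V → ℝ), (∀ e, lb e = cc * la e) →
      ∀ z w, Phi (I ∪ J) lb z w = cc * Phi (I ∪ J) la z w := by
    intro cc la lb hab z w
    rw [Phi, Phi, Finset.mul_sum]
    exact Finset.sum_congr rfl (fun g _ => by rw [hab g]; ring)
  have hpair : ∀ a b : ℝ, a • l₁ + b • l₂ = 0 → a = 0 ∧ b = 0 := by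
    intro a b hab
    by_cases hb : b = 0
    · subst hb
      refine ⟨?_, rfl⟩
      by_contra ha
      apply hl₁ne
      funext e
      have h1 := congrFun hab e
      simp only [Pi.add_apply, Pi.smul_apply, smul_eq_mul, Pi.zero_apply, zero_smul, zero_mul,
        add_zero] at h1
      simp only [Pi.zero_apply]
      rcases mul_eq_zero.mp h1 with h | h
      · exact absurd h ha
      · exact h
    · exfalso
      have h2 : ∀ e, l₂ e = (-a / b) * l₁ e := by
        intro e
        have h1 := congrFun hab e
        simp only [Pi.add_apply, Pi.smul_apply, smul_eq_mul, Pi.zero_apply] at h1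
        field_simp
        linarith
      by_cases ha : a = 0
      · apply hl₂ne
        funext e
        simp only [Pi.zero_apply]
        rw [h2 e, ha]
        ring
      · have h3 := Phi_mul (-a / b) l₁ l₂ h2 ζ w₀
        rw [hl₂phi w₀] at h3
        have hne : (-a / b) ≠ 0 := div_ne_zero (neg_ne_zero.mpr ha) hb
        rcases mul_eq_zero.mp h3.symm with h | h
        · exact hne h
        · exact hζ h
  have hJrestr_ind :
      LinearIndependent ℝ ![(fun j : ↑J => l₁ ↑j), (fun j : ↑J => l₂ ↑j)] := by
    rw [LinearIndependent.pair_iff]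
    intro s t hst
    apply hpair s t
    apply injJ _ (supp_comb s t l₁ l₂ hl₁supp hl₂supp) (stress_comb s t l₁ l₂ hl₁stress hl₂stress)
    intro e he
    have h1 := congrFun hst ⟨e, he⟩
    simpa using h1
  have hJ2 : J.card = 2 := by
    have hle := hJrestr_ind.fintype_card_le_finrank
    rw [Module.finrank_pi] at hle
    simp only [Fintype.card_fin, Fintype.card_coe] at hle
    omega
  have hspan2 : ∀ lam : Sym2 V → ℝ, (∀ g, lam g ≠ 0 → g ∈ I ∪ J) → StressD d p (I ∪ J) lam →
      ∃ a b : ℝ, lam = a • l₁ + b • l₂ := by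
    intro lam hsupp hstress
    have htop : Submodule.span ℝ
        (Set.range ![(fun j : ↑J => l₁ ↑j), (fun j : ↑J => l₂ ↑j)]) = ⊤ := by
      apply hJrestr_ind.span_eq_top_of_card_eq_finrank
      rw [Module.finrank_pi]
      simp [Fintype.card_coe, hJ2]
    have hrange : Set.range ![(fun j : ↑J => l₁ ↑j), (fun j : ↑J => l₂ ↑j)] =
        {(fun j : ↑J => l₁ ↑j), (fun j : ↑J => l₂ ↑j)} := by
      simp only [Matrix.range_cons, Matrix.range_empty, Set.union_empty,
        Set.union_singleton]
      exact Set.pair_comm _ _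
    have hmem : (fun j : ↑J => lam ↑j) ∈ Submodule.span ℝ
        ({(fun j : ↑J => l₁ ↑j), (fun j : ↑J => l₂ ↑j)} : Set (↑J → ℝ)) := by
      rw [← hrange, htop]
      trivial
    obtain ⟨a, b, hab⟩ := Submodule.mem_span_pair.mp hmem
    refine ⟨a, b, ?_⟩
    have hX : lam - (a • l₁ + b • l₂) = (1 : ℝ) • lam + (-1 : ℝ) • (a • l₁ + b • l₂) := by
      funext e
      simp only [Pi.sub_apply, Pi.add_apply, Pi.smul_apply, smul_eq_mul]
      ring
    have h0 : lam - (a • l₁ + b • l₂) = 0 := by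
      rw [hX]
      apply injJ
      · exact supp_comb 1 (-1) _ _ hsupp (supp_comb a b l₁ l₂ hl₁supp hl₂supp)
      · exact stress_comb 1 (-1) _ _ hstress (stress_comb a b l₁ l₂ hl₁stress hl₂stress)
      · intro e he
        have h1 := congrFun hab ⟨e, he⟩
        simp only [Pi.add_apply, Pi.smul_apply, smul_eq_mul] at h1 ⊢
        simp only [Pi.neg_apply, neg_smul, one_smul, neg_one_mul] at *
        have : l₁ e = (fun j : ↑J => l₁ ↑j) ⟨e, he⟩ := rfl
        linarith [h1]
    have h1 := sub_eq_zero.mp h0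
    exact h1
  have PhiL : ∀ lam : Sym2 V → ℝ, ∃ L : (V → ℝ) →ₗ[ℝ] (V → ℝ),
      ∀ z w, L z w = Phi (I ∪ J) lam z w := by
    intro lam
    refine ⟨{ toFun := fun z => fun w => Phi (I ∪ J) lam z w,
              map_add' := ?_, map_smul' := ?_ }, fun z w => rfl⟩
    · intro z z'
      funext w
      simp only [Phi, Pi.add_apply]
      rw [← Finset.sum_add_distrib]
      exact Finset.sum_congr rfl (fun g _ => by rw [zeta_add]; ring)
    · intro a z
      funext w
      simp only [Phi, RingHom.id_apply, Pi.smul_apply, smul_eq_mul]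
      rw [Finset.mul_sum]
      exact Finset.sum_congr rfl (fun g _ => by rw [zeta_smul]; ring)
  obtain ⟨L₁, hL₁⟩ := PhiL l₁
  obtain ⟨L₂, hL₂⟩ := PhiL l₂
  have hdep : ∀ z, ∃ a b : ℝ, (a ≠ 0 ∨ b ≠ 0) ∧ a • L₁ z + b • L₂ z = 0 := by
    intro z
    obtain ⟨lam, hlamne, hlamsupp, hlamstress, hlamphi⟩ := main z
    obtain ⟨a, b, hab⟩ := hspan2 lam hlamsupp hlamstress
    refine ⟨a, b, ?_, ?_⟩
    · by_contra h0
      push_neg at h0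
      apply hlamne
      rw [hab, h0.1, h0.2]
      simp
    · funext w
      simp only [Pi.add_apply, Pi.smul_apply, smul_eq_mul, Pi.zero_apply]
      rw [hL₁, hL₂, ← Phi_comb, ← hab]
      exact hlamphi w
  rcases pencil L₁ L₂ hdep with ⟨a, b, habne, hall⟩ | ⟨c, hcne, hline⟩
  · have hcomb0 : a • l₁ + b • l₂ = 0 := by
      apply eq_zero_of_phi_zero hnd (supp_comb a b l₁ l₂ hl₁supp hl₂supp)
      intro z w
      rw [Phi_comb]
      have h1 := congrFun (hall z) w
      simp only [Pi.add_apply, Pi.smul_apply, smul_eq_mul, Pi.zero_apply] at h1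
      rw [hL₁, hL₂] at h1
      exact h1
    obtain ⟨h1, h2⟩ := hpair a b hcomb0
    rcases habne with h | h
    · exact h h1
    · exact h h2
  · have hline1 : ∀ z, ∃ t : ℝ, (fun w => Phi (I ∪ J) l₁ z w) = t • c := by
      intro z
      obtain ⟨t, ht⟩ := (hline z).1
      refine ⟨t, ?_⟩
      rw [← ht]
      funext w
      exact (hL₁ z w).symm
    have hline2 : ∀ z, ∃ t : ℝ, (fun w => Phi (I ∪ J) l₂ z w) = t • c := by
      intro z
      obtain ⟨t, ht⟩ := (hline z).2
      refine ⟨t, ?_⟩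
      rw [← ht]
      funext w
      exact (hL₂ z w).symm
    obtain ⟨κ₁, hκ₁⟩ := rank1_structure hl₁supp hcne hline1
    obtain ⟨κ₂, hκ₂⟩ := rank1_structure hl₂supp hcne hline2
    have hdiag : ∀ (lam : Sym2 V → ℝ), (∀ g, lam g ≠ 0 → g ∈ I ∪ J) →
        ∀ x : V, lam s(x, x) = 0 := by
      intro lam hsupp x
      by_contra h0
      exact hnd _ (hsupp _ h0) (Sym2.mk_isDiag_iff.mpr rfl)
    have hcomb0 : κ₂ • l₁ + (-κ₁) • l₂ = 0 := by
      funext g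
      simp only [Pi.add_apply, Pi.smul_apply, smul_eq_mul, Pi.zero_apply]
      induction g using Sym2.inductionOn with
      | hf x w =>
        by_cases hxw : x = w
        · subst hxw
          rw [hdiag l₁ hl₁supp x, hdiag l₂ hl₂supp x]
          ring
        · rw [hκ₁ x w hxw, hκ₂ x w hxw]
          ring
    obtain ⟨h1, h2⟩ := hpair _ _ hcomb0
    have hκ₁0 : κ₁ = 0 := by linarith
    apply hl₁ne
    funext g
    simp only [Pi.zero_apply]
    induction g using Sym2.inductionOn with
    | hf x w =>
      by_cases hxw : x = w
      · subst hxw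
        exact hdiag l₁ hl₁supp x
      · rw [hκ₁ x w hxw, hκ₁0]
        ring

noncomputable def pRow (d : ℕ) (e : Sym2 V) (wi : V × Fin d) :
    MvPolynomial (V × Fin d) ℚ :=
  Sym2.lift
    ⟨fun u v =>
        (((if wi.1 = u then (1 : MvPolynomial (V × Fin d) ℚ) else 0) -
          (if wi.1 = v then 1 else 0)) *
          (MvPolynomial.X (u, wi.2) - MvPolynomial.X (v, wi.2))),
      fun u v => by ring⟩ e

theorem pRow_eval (d : ℕ) (x : V × Fin d → ℝ) (e : Sym2 V) (wi : V × Fin d) :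
    MvPolynomial.aeval x (pRow d e wi) = rigRow d (fun v i => x (v, i)) e wi := by
  induction e using Sym2.inductionOn with
  | hf u v =>
    simp only [pRow, Sym2.lift_mk, rigRow_mk, map_mul, map_sub, MvPolynomial.aeval_X,
      apply_ite (MvPolynomial.aeval x), map_one, map_zero]

theorem exists_det_ne_zero {d : ℕ} {c : V → Fin d → ℝ} {I : Finset (Sym2 V)}
    (h : LinearIndependent ℝ (fun e : ↑I => rigRow d c ↑e)) :
    ∃ φ : ↑I → V × Fin d,
      (Matrix.of fun i j : ↑I => rigRow d c ↑i (φ j)).det ≠ 0 := by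
  classical
  set A : Matrix ↑I (V × Fin d) ℝ := Matrix.of (fun i j => rigRow d c ↑i j) with hA
  have hinj : Function.Injective (Matrix.mulVecLin A.transpose) := by
    rw [← LinearMap.ker_eq_bot, LinearMap.ker_eq_bot']
    intro u hu
    have hsum : (∑ i : ↑I, u i • rigRow d c ↑i) = 0 := by
      funext j
      have h1 := congrFun hu j
      simp only [Matrix.mulVecLin_apply, Matrix.mulVec, dotProduct,
        Matrix.transpose_apply, Pi.zero_apply] at h1
      simp only [Finset.sum_apply, Pi.smul_apply, smul_eq_mul, Pi.zero_apply]
      rw [← h1]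
      exact Finset.sum_congr rfl (fun i _ => by rw [mul_comm]; rfl)
    exact funext (fun i => Fintype.linearIndependent_iff.mp h u hsum i)
  have hrankT : A.transpose.rank = Fintype.card ↑I := by
    have h1 := LinearMap.finrank_range_add_finrank_ker (Matrix.mulVecLin A.transpose)
    rw [LinearMap.ker_eq_bot.mpr hinj, finrank_bot, add_zero] at h1
    rw [Matrix.rank, h1, Module.finrank_pi]
  have hrank : A.rank = Fintype.card ↑I := by
    rw [← Matrix.rank_transpose]
    exact hrankT
  have hcols : Submodule.span ℝ (Set.range A.transpose) = ⊤ := by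
    change Submodule.span ℝ (Set.range A.col) = ⊤
    rw [← Matrix.range_mulVecLin]
    apply Submodule.eq_top_of_finrank_eq
    have h1 : Module.finrank ℝ ↥(LinearMap.range A.mulVecLin) = A.rank := rfl
    rw [h1, hrank, Module.finrank_pi]
  obtain ⟨b, hbsub, hbspan, hbind⟩ := exists_linearIndependent ℝ (Set.range A.transpose)
  rw [hcols] at hbspan
  have hbfin : b.Finite := hbind.setFinite
  haveI := hbfin.fintype
  have hbcard : b.toFinset.card = Fintype.card ↑I := by
    have h1 := finrank_span_set_eq_card hbind
    rw [hbspan, finrank_top, Module.finrank_pi] at h1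
    exact h1.symm
  have hcard2 : Fintype.card ↑I = Fintype.card ↑b := by
    rw [← hbcard, Set.toFinset_card]
  have e : ↑I ≃ ↑b := Fintype.equivOfCardEq hcard2
  have hpre : ∀ x : ↑b, ∃ j : V × Fin d, A.transpose j = ↑x := fun x => hbsub x.2
  choose ψ hψ using hpre
  refine ⟨fun i => ψ (e i), ?_⟩
  intro hdet0
  obtain ⟨u, hu0, huv⟩ := Matrix.exists_mulVec_eq_zero_iff.mpr hdet0
  have hind2 : LinearIndependent ℝ (fun j : ↑I => ((e j : ↑b) : ↑I → ℝ)) := by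
    have h1 : LinearIndependent ℝ (fun x : ↑b => (x : ↑I → ℝ)) := hbind
    exact h1.comp e e.injective
  have hzero : (∑ j : ↑I, u j • ((e j : ↑b) : ↑I → ℝ)) = 0 := by
    funext i
    have h1 := congrFun huv i
    simp only [Matrix.mulVec, dotProduct, Pi.zero_apply] at h1
    simp only [Finset.sum_apply, Pi.smul_apply, smul_eq_mul, Pi.zero_apply]
    rw [← h1]
    refine Finset.sum_congr rfl (fun j _ => ?_)
    have h2 : ((e j : ↑b) : ↑I → ℝ) i = rigRow d c ↑i (ψ (e j)) := by
      rw [← hψ (e j)]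
      rfl
    rw [h2, mul_comm]
    rfl
  have := Fintype.linearIndependent_iff.mp hind2 u hzero
  exact hu0 (funext this)

theorem indep_transfer {d : ℕ} {q : V → Fin d → ℝ}
    (hq : AlgebraicIndependent ℚ (fun vi : V × Fin d => q vi.1 vi.2))
    {c : V → Fin d → ℝ} {I : Finset (Sym2 V)}
    (h : LinearIndependent ℝ (fun e : ↑I => rigRow d c ↑e)) :
    LinearIndependent ℝ (fun e : ↑I => rigRow d q ↑e) := by
  classical
  obtain ⟨φ, hdet⟩ := exists_det_ne_zero h
  set P : Matrix ↑I ↑I (MvPolynomial (V × Fin d) ℚ) :=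
    Matrix.of (fun i j => pRow d (↑i : Sym2 V) (φ j)) with hP
  have hmapc : P.map (MvPolynomial.aeval fun vi => c vi.1 vi.2) =
      Matrix.of (fun i j : ↑I => rigRow d c ↑i (φ j)) := by
    ext i j
    simp only [hP, Matrix.map_apply, Matrix.of_apply]
    exact pRow_eval d _ _ _
  have hmapq : P.map (MvPolynomial.aeval fun vi => q vi.1 vi.2) =
      Matrix.of (fun i j : ↑I => rigRow d q ↑i (φ j)) := by
    ext i j
    simp only [hP, Matrix.map_apply, Matrix.of_apply]
    exact pRow_eval d _ _ _
  have hPdet : P.det ≠ 0 := by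
    intro h0
    apply hdet
    have hmm : P.map ⇑(MvPolynomial.aeval fun vi : V × Fin d => c vi.1 vi.2) =
        (MvPolynomial.aeval fun vi : V × Fin d => c vi.1 vi.2).mapMatrix P := rfl
    rw [← hmapc, hmm, ← AlgHom.map_det, h0, map_zero]
  have hdetq : (Matrix.of (fun i j : ↑I => rigRow d q ↑i (φ j))).det ≠ 0 := by
    have hmm : P.map ⇑(MvPolynomial.aeval fun vi : V × Fin d => q vi.1 vi.2) =
        (MvPolynomial.aeval fun vi : V × Fin d => q vi.1 vi.2).mapMatrix P := rfl
    rw [← hmapq, hmm, ← AlgHom.map_det]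
    intro h0
    apply hPdet
    apply hq
    rw [h0, map_zero]
  rw [Fintype.linearIndependent_iff]
  intro u hu
  set M := Matrix.of (fun i j : ↑I => rigRow d q (↑i : Sym2 V) (φ j)) with hM
  have hMv : M.transpose.mulVec u = 0 := by
    funext j
    have h1 := congrFun hu (φ j)
    simp only [Finset.sum_apply, Pi.smul_apply, smul_eq_mul, Pi.zero_apply] at h1
    simp only [Matrix.mulVec, dotProduct, Matrix.transpose_apply, Pi.zero_apply]
    rw [← h1]
    exact Finset.sum_congr rfl (fun i _ => by rw [mul_comm]; rfl)
  intro i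
  by_contra hui
  have hu0 : u ≠ 0 := fun h0 => hui (by rw [h0]; rfl)
  have hdet0 : M.transpose.det = 0 := Matrix.exists_mulVec_eq_zero_iff.mp ⟨u, hu0, hMv⟩
  rw [Matrix.det_transpose] at hdet0
  exact hdetq hdet0

theorem rrk_le_rrk_generic {d : ℕ} {q : V → Fin d → ℝ}
    (hq : AlgebraicIndependent ℚ (fun vi : V × Fin d => q vi.1 vi.2))
    (c : V → Fin d → ℝ) (F : Finset (Sym2 V)) :
    rrk d c ↑F ≤ rrk d q ↑F := by
  obtain ⟨I, hIF, hIcard, hIind⟩ := exists_subbasis d c F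
  calc rrk d c ↑F = I.card := hIcard.symm
  _ = rrk d q ↑I := (rrk_coe_of_linearIndependent (indep_transfer hq hIind)).symm
  _ ≤ rrk d q ↑F := rrk_mono d q (Finset.coe_subset.mpr hIF)

theorem rrk_lift (dd : ℕ) (q : Option V → Fin dd → ℝ) (B₀ : Finset (Sym2 V)) :
    rrk dd q ↑(B₀.image (Sym2.map Option.some)) = rrk dd (fun v => q (Option.some v)) ↑B₀ := by
  classical
  set ext0 : ((V × Fin dd) → ℝ) →ₗ[ℝ] ((Option V × Fin dd) → ℝ) :=
    { toFun := fun f oi => Option.rec 0 (fun v => f (v, oi.2)) oi.1,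
      map_add' := by
        intro f g
        funext oi
        obtain ⟨o, i⟩ := oi
        cases o <;> simp
      map_smul' := by
        intro a f
        funext oi
        obtain ⟨o, i⟩ := oi
        cases o <;> simp } with hext0
  have hext0inj : Function.Injective ext0 := by
    intro f g hfg
    funext vi
    obtain ⟨v, i⟩ := vi
    exact congrFun hfg (Option.some v, i)
  have hrow : ∀ e : Sym2 V,
      ext0 (rigRow dd (fun v => q (Option.some v)) e) = rigRow dd q (Sym2.map Option.some e) := by
    intro e
    induction e using Sym2.inductionOn with
    | hf u v =>
      funext oi
      obtain ⟨o, i⟩ := oi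
      cases o with
      | none =>
        simp only [Sym2.map_pair_eq, rigRow_mk]
        show (0 : ℝ) = _
        simp
      | some w =>
        simp only [Sym2.map_pair_eq, rigRow_mk]
        show rigRow dd (fun v => q (Option.some v)) s(u, v) (w, i) = _
        rw [rigRow_mk]
        simp [Option.some.injEq]
  have himg : rigRow dd q '' ↑(B₀.image (Sym2.map Option.some)) =
      ext0 '' (rigRow dd (fun v => q (Option.some v)) '' ↑B₀) := by
    rw [Finset.coe_image, ← Set.image_comp, ← Set.image_comp]
    exact Set.image_congr (fun e _ => (hrow e).symm)
  rw [rrk, rrk, himg, Submodule.span_image]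
  exact (LinearEquiv.finrank_eq (Submodule.equivMapOfInjective ext0 hext0inj _)).symm

end ConeAux

set_option maxHeartbeats 1000000 in
open ConeAux in
/-- Corollary 4.7: if all cone edges lie in one part of the principal partition of
the cone of a `k`-fold `R_d`-circuit, then `k = 1`. -/
theorem cone_edges_same_part_implies_circuit
    (d k : ℕ) (hd : 1 ≤ d) (hk : 1 ≤ k)
    {V : Type*} [Fintype V] [DecidableEq V]
    (D : Finset (Sym2 V)) (hsimple : ∀ e ∈ D, ¬ e.IsDiag)
    (hcov : ∀ w : V, ∃ e ∈ D, w ∈ e)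
    (p : V → Fin d → ℝ) (hp : Generic d p)
    (q : Option V → Fin (d+1) → ℝ) (hq : Generic (d+1) q)
    (hD : IsKFoldCircuit d p D k)
    (hsame : ∃ A' : Finset (Sym2 (Option V)),
        IsPrincipalPart (d+1) q (coneEdges D) k A' ∧
        ∀ u : V, s((Option.some u : Option V), (none : Option V)) ∈ A') :
    k = 1 := by
  classical
  by_contra hk1
  have hk2 : 2 ≤ k := by omega
  obtain ⟨A', ⟨B, hBsub, hBcirc, hA'⟩, happex⟩ := hsame
  have hapex : ∀ u : V, s((Option.some u : Option V), (none : Option V)) ∉ B := by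
    intro u hu
    have h1 := happex u
    rw [hA'] at h1
    exact (Finset.mem_sdiff.mp h1).2 hu
  set B₀ : Finset (Sym2 V) := D.filter (fun e => Sym2.map Option.some e ∈ B) with hB₀
  have hB₀D : B₀ ⊆ D := Finset.filter_subset _ _
  have hBeq : B = B₀.image (Sym2.map Option.some) := by
    ext b
    simp only [Finset.mem_image, hB₀, Finset.mem_filter]
    constructor
    · intro hb
      have h1 := hBsub hb
      rw [coneEdges, Finset.mem_union] at h1
      rcases h1 with h | h
      · obtain ⟨e, heD, hee⟩ := Finset.mem_image.mp h
        exact ⟨e, ⟨heD, by rw [hee]; exact hb⟩, hee⟩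
      · obtain ⟨u, _, hu⟩ := Finset.mem_image.mp h
        exact absurd (hu ▸ hb) (hapex u)
    · rintro ⟨e, ⟨_, he⟩, rfl⟩
      exact he
  have hcardB : B.card = B₀.card := by
    rw [hBeq]
    exact Finset.card_image_of_injective _ (Sym2.map.injective (Option.some_injective V))
  have hqa : AlgebraicIndependent ℚ
      (fun vi : Option V × Fin (d+1) => q vi.1 vi.2) := hq
  have hq' : AlgebraicIndependent ℚ
      (fun vi : V × Fin (d+1) => q (Option.some vi.1) vi.2) := by
    have hinj : Function.Injective
        (fun vi : V × Fin (d+1) => ((Option.some vi.1 : Option V), vi.2)) := by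
      intro a b hab
      simp only [Prod.mk.injEq, Option.some.injEq] at hab
      exact Prod.ext hab.1 hab.2
    have h1 := hqa.comp (fun vi : V × Fin (d+1) => ((Option.some vi.1 : Option V), vi.2)) hinj
    simpa [Function.comp_def] using h1
  have hrkB₀ : rrk (d+1) (fun v => q (Option.some v)) ↑B₀ + (k - 1) = B₀.card := by
    have h2 : rrk (d+1) (fun v => q (Option.some v)) ↑B₀ = rrk (d+1) q ↑B := by
      rw [hBeq]
      exact (rrk_lift (d+1) q B₀).symm
    rw [h2, ← hcardB]
    exact hBcirc.2
  have hdefB₀ : B₀.card ≤ rrk d p ↑B₀ + k := by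
    have h1 : rrk d p ↑D + k = D.card := hD.2
    have h2 : rrk d p ↑D ≤ rrk d p ↑B₀ + (D \ B₀).card := by
      have hun : B₀ ∪ (D \ B₀) = D := Finset.union_sdiff_of_subset hB₀D
      calc rrk d p ↑D = rrk d p ↑(B₀ ∪ (D \ B₀)) := by rw [hun]
      _ ≤ rrk d p ↑B₀ + (D \ B₀).card := rrk_union_le d p _ _
    have h3 : (D \ B₀).card + B₀.card = D.card := Finset.card_sdiff_add_card_eq_card hB₀D
    omega
  obtain ⟨I, hIB₀, hIcard, hIind⟩ := exists_subbasis d p B₀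
  set J : Finset (Sym2 V) := B₀ \ I with hJ
  have hJcard : J.card + I.card = B₀.card := Finset.card_sdiff_add_card_eq_card hIB₀
  have hJk : J.card ≤ k := by omega
  obtain ⟨J', hJ'sub, hJ'card⟩ :=
    Finset.exists_subset_card_eq (s := J) (n := min 2 J.card) (min_le_right _ _)
  have hdisj : Disjoint I J' := by
    rw [Finset.disjoint_left]
    intro a haI haJ'
    exact (Finset.mem_sdiff.mp (hJ'sub haJ')).2 haI
  have hnd : ∀ e ∈ I ∪ J', ¬ e.IsDiag := by
    intro e he
    apply hsimple
    rcases Finset.mem_union.mp he with h | h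
    · exact hB₀D (hIB₀ h)
    · exact hB₀D (Finset.sdiff_subset (hJ'sub h))
  obtain ⟨z, hzind⟩ := keyLemma d p I J' hdisj (by rw [hJ'card]; exact min_le_left 2 J.card) hnd hIind
  have hsnoc : rrk (d+1) (fun v => Fin.snoc (p v) (z v)) ↑(I ∪ J') = (I ∪ J').card :=
    rrk_coe_of_linearIndependent hzind
  have hge : (I ∪ J').card ≤ rrk (d+1) (fun v => q (Option.some v)) ↑(I ∪ J') := by
    have hle := rrk_le_rrk_generic (q := fun v => q (Option.some v)) hq'
      (fun v => Fin.snoc (p v) (z v)) (I ∪ J')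
    rw [hsnoc] at hle
    exact hle
  have hmono : rrk (d+1) (fun v => q (Option.some v)) ↑(I ∪ J') ≤
      rrk (d+1) (fun v => q (Option.some v)) ↑B₀ := by
    apply rrk_mono
    rw [Finset.coe_subset]
    exact Finset.union_subset hIB₀ (hJ'sub.trans Finset.sdiff_subset)
  have hcardIJ : (I ∪ J').card = I.card + J'.card := Finset.card_union_of_disjoint hdisj
  rcases le_or_gt J.card 2 with hc | hc
  · have hmin : min 2 J.card = J.card := min_eq_right hc
    omega
  · have hmin : min 2 J.card = 2 := min_eq_left (by omega)
    omega
end
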